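/- arXiv:2004.14455 — 9 statements merged into one kernel-verified Lean document; each statement's English description precedes it below -/
import Mathlib

section
/- Let Θ be an N×N symmetric positive-definite real matrix and S a lower-triangular sparsity set with associated matrix class 𝒮 and column index sets s_j. Define L ∈ ℝ^{N×N} column-wise by L_{s_j,j} := Θ_{s_j,s_j}⁻¹ e₁ / √(e₁ᵀ Θ_{s_j,s_j}⁻¹ e₁) and L_{ij} := 0 for (i,j) ∉ S. Then L belongs to 𝒮, all diagonal entries of L are positive, and for every L̂ ∈ 𝒮 with positive diagonal entries one has 𝒟(Θ, (L Lᵀ)⁻¹) ≤ 𝒟(Θ, (L̂ L̂ᵀ)⁻¹); that is, L minimizes the Kullback–Leibler divergence between N(0,Θ) and N(0,(L̂L̂ᵀ)⁻¹) subject to the sparsity constraint L̂ ∈ 𝒮. -/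
open Matrix

noncomputable section

/-- The Gaussian KL functional
`𝒟(Θ₁, Θ₂) = (trace(Θ₂⁻¹ Θ₁) + log det Θ₂ − log det Θ₁ − N)/2`,
the Kullback–Leibler divergence between `N(0, Θ₁)` and `N(0, Θ₂)`. -/
def gaussKL {N : ℕ} (Θ₁ Θ₂ : Matrix (Fin N) (Fin N) ℝ) : ℝ :=
  ((Θ₂⁻¹ * Θ₁).trace + Real.log Θ₂.det - Real.log Θ₁.det - (N : ℝ)) / 2

/-- The index set `s_j = {i : (i, j) ∈ S}` of column `j`, as a subtype. -/
abbrev colIdx {N : ℕ} (S : Finset (Fin N × Fin N)) (j : Fin N) : Type :=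
  {i : Fin N // (i, j) ∈ S}

/-- The principal submatrix `Θ_{s_j, s_j}`. -/
def colSub {N : ℕ} (Θ : Matrix (Fin N) (Fin N) ℝ) (S : Finset (Fin N × Fin N))
    (j : Fin N) : Matrix (colIdx S j) (colIdx S j) ℝ :=
  Θ.submatrix Subtype.val Subtype.val

/-- The standard basis vector `e₁` of `ℝ^{s_j}` corresponding to the index `j`. -/
def colE1 {N : ℕ} (S : Finset (Fin N × Fin N)) (j : Fin N) (h : (j, j) ∈ S) :
    colIdx S j → ℝ :=
  Pi.single ⟨j, h⟩ 1

/-- The KL-optimal sparse factor `L`, defined columnwise by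
`L_{s_j, j} = Θ_{s_j,s_j}⁻¹ e₁ / √(e₁ᵀ Θ_{s_j,s_j}⁻¹ e₁)` and `L i j = 0` for `(i,j) ∉ S`. -/
def klFactor {N : ℕ} (Θ : Matrix (Fin N) (Fin N) ℝ) (S : Finset (Fin N × Fin N))
    (hdiag : ∀ i : Fin N, (i, i) ∈ S) : Matrix (Fin N) (Fin N) ℝ :=
  fun i j =>
    if h : (i, j) ∈ S then
      ((colSub Θ S j)⁻¹ *ᵥ colE1 S j (hdiag j)) ⟨i, h⟩ /
        Real.sqrt (colE1 S j (hdiag j) ⬝ᵥ ((colSub Θ S j)⁻¹ *ᵥ colE1 S j (hdiag j)))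
    else 0

/-! ### Auxiliary lemmas -/



lemma myPosDef_submatrix {n m : Type*} [Fintype n] [Fintype m] [DecidableEq n] [DecidableEq m]
    {M : Matrix n n ℝ} (hM : M.PosDef) (f : m → n) (hf : Function.Injective f) :
    (M.submatrix f f).PosDef := by
  set P : Matrix n m ℝ := (1 : Matrix n n ℝ).submatrix id f with hPdef
  have hP : ∀ (x : m → ℝ) (i : m), (P *ᵥ x) (f i) = x i := by
    intro x i
    simp only [hPdef, mulVec, dotProduct, submatrix_apply, id_eq, one_apply, hf.eq_iff]
    simp [Finset.sum_ite_eq']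
  have key : M.submatrix f f = Pᴴ * M * P := by
    ext i j
    simp only [mul_apply, conjTranspose_apply, hPdef, submatrix_apply, id_eq, one_apply,
      star_trivial, submatrix_apply]
    simp [ite_mul, mul_ite, Finset.sum_ite_eq, Finset.sum_ite_eq']
  refine posDef_iff_dotProduct_mulVec.mpr ⟨hM.isHermitian.submatrix f, fun x hx => ?_⟩
  rw [key]
  have hx' : P *ᵥ x ≠ 0 := by
    intro h0
    apply hx
    funext i
    have := congrFun h0 (f i)
    rw [hP x i] at this
    simpa using this
  have := hM.dotProduct_mulVec_pos hx'
  simpa only [star_mulVec, dotProduct_mulVec, vecMul_vecMul, Matrix.mul_assoc] using this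

lemma my_symm {ι : Type*} [Fintype ι] {A : Matrix ι ι ℝ} (hA : A.IsHermitian)
    (x y : ι → ℝ) : x ⬝ᵥ A *ᵥ y = y ⬝ᵥ A *ᵥ x := by
  have hAt : ∀ i j, A i j = A j i := fun i j => by
    nth_rewrite 1 [← hA]
    simp [conjTranspose_apply]
  simp only [dotProduct, mulVec, Finset.mul_sum]
  rw [Finset.sum_comm]
  refine Finset.sum_congr rfl fun j _ => Finset.sum_congr rfl fun i _ => ?_
  rw [hAt i j]; ring

lemma my_cauchy {ι : Type*} [Fintype ι] {A : Matrix ι ι ℝ} (hA : A.PosSemidef)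
    (u v : ι → ℝ) : (u ⬝ᵥ A *ᵥ v) ^ 2 ≤ (u ⬝ᵥ A *ᵥ u) * (v ⬝ᵥ A *ᵥ v) := by
  have hq : ∀ t : ℝ, 0 ≤ (v ⬝ᵥ A *ᵥ v) * (t * t) + (2 * (u ⬝ᵥ A *ᵥ v)) * t + (u ⬝ᵥ A *ᵥ u) := by
    intro t
    have h0 := hA.dotProduct_mulVec_nonneg (u + t • v)
    simp only [star_trivial, mulVec_add, mulVec_smul, dotProduct_add, add_dotProduct,
      dotProduct_smul, smul_dotProduct, smul_eq_mul] at h0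
    rw [my_symm hA.isHermitian v u] at h0
    calc (0:ℝ) ≤ _ := h0
    _ = (v ⬝ᵥ A *ᵥ v) * (t * t) + (2 * (u ⬝ᵥ A *ᵥ v)) * t + (u ⬝ᵥ A *ᵥ u) := by ring
  have hd := discrim_le_zero hq
  rw [discrim] at hd
  nlinarith [hd]

lemma my_c_pos {ι : Type*} [Fintype ι] [DecidableEq ι] {A : Matrix ι ι ℝ} (hA : A.PosDef)
    (i0 : ι) : 0 < Pi.single i0 1 ⬝ᵥ A⁻¹ *ᵥ Pi.single i0 1 := by
  have he0 : (Pi.single i0 1 : ι → ℝ) ≠ 0 := by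
    intro h
    have := congrFun h i0
    simp at this
  simpa using hA.inv.dotProduct_mulVec_pos he0

lemma my_uAu {ι : Type*} [Fintype ι] [DecidableEq ι] {A : Matrix ι ι ℝ} (hA : A.PosDef)
    (e : ι → ℝ) : (A⁻¹ *ᵥ e) ⬝ᵥ A *ᵥ (A⁻¹ *ᵥ e) = e ⬝ᵥ A⁻¹ *ᵥ e := by
  have hAu : A *ᵥ (A⁻¹ *ᵥ e) = e := by
    rw [mulVec_mulVec, Matrix.mul_nonsing_inv _ (isUnit_iff_ne_zero.mpr hA.det_pos.ne'),
      one_mulVec]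
  rw [hAu, dotProduct_comm]

lemma my_col_key {ι : Type*} [Fintype ι] [DecidableEq ι] {A : Matrix ι ι ℝ} (hA : A.PosDef)
    (i0 : ι) (v : ι → ℝ) (hv : 0 < v i0) :
    1 - Real.log (Pi.single i0 1 ⬝ᵥ A⁻¹ *ᵥ Pi.single i0 1) ≤
      v ⬝ᵥ A *ᵥ v - 2 * Real.log (v i0) := by
  set e : ι → ℝ := Pi.single i0 1 with he
  set u : ι → ℝ := A⁻¹ *ᵥ e with hu
  have hc : 0 < e ⬝ᵥ u := my_c_pos hA i0
  have huu : u ⬝ᵥ A *ᵥ u = e ⬝ᵥ u := my_uAu hA e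
  have hAu : A *ᵥ u = e := by
    rw [hu, mulVec_mulVec, Matrix.mul_nonsing_inv _ (isUnit_iff_ne_zero.mpr hA.det_pos.ne'),
      one_mulVec]
  have huv : u ⬝ᵥ A *ᵥ v = v i0 := by
    rw [my_symm hA.isHermitian, hAu, he, dotProduct_single, mul_one]
  have hq : 0 < v ⬝ᵥ A *ᵥ v := by
    have hv0 : v ≠ 0 := fun h => by simp [h] at hv
    simpa using hA.dotProduct_mulVec_pos hv0
  have hcs : (v i0) ^ 2 ≤ (e ⬝ᵥ u) * (v ⬝ᵥ A *ᵥ v) := by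
    have := my_cauchy hA.posSemidef u v
    rwa [huv, huu] at this
  have hlog : 2 * Real.log (v i0) ≤ Real.log (e ⬝ᵥ u) + Real.log (v ⬝ᵥ A *ᵥ v) := by
    have h1 : Real.log ((v i0) ^ 2) ≤ Real.log ((e ⬝ᵥ u) * (v ⬝ᵥ A *ᵥ v)) :=
      Real.log_le_log (by positivity) hcs
    rw [Real.log_pow, Real.log_mul hc.ne' hq.ne'] at h1
    simpa using h1
  have hlq : Real.log (v ⬝ᵥ A *ᵥ v) ≤ v ⬝ᵥ A *ᵥ v - 1 := Real.log_le_sub_one_of_pos hq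
  linarith

lemma my_opt_diag {ι : Type*} [Fintype ι] [DecidableEq ι] {A : Matrix ι ι ℝ} (_hA : A.PosDef)
    (i0 : ι) :
    (A⁻¹ *ᵥ Pi.single i0 1) i0 /
        Real.sqrt (Pi.single i0 1 ⬝ᵥ A⁻¹ *ᵥ Pi.single i0 1) =
      Real.sqrt (Pi.single i0 1 ⬝ᵥ A⁻¹ *ᵥ Pi.single i0 1) := by
  have h1 : (A⁻¹ *ᵥ Pi.single i0 1) i0 = Pi.single i0 1 ⬝ᵥ A⁻¹ *ᵥ Pi.single i0 1 := by
    rw [single_dotProduct, one_mul]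
  rw [h1, Real.div_sqrt]

lemma my_opt_val {ι : Type*} [Fintype ι] [DecidableEq ι] {A : Matrix ι ι ℝ} (hA : A.PosDef)
    (i0 : ι) :
    (fun i => (A⁻¹ *ᵥ Pi.single i0 1) i /
        Real.sqrt (Pi.single i0 1 ⬝ᵥ A⁻¹ *ᵥ Pi.single i0 1)) ⬝ᵥ
      A *ᵥ (fun i => (A⁻¹ *ᵥ Pi.single i0 1) i /
        Real.sqrt (Pi.single i0 1 ⬝ᵥ A⁻¹ *ᵥ Pi.single i0 1)) = 1 := by
  set e : ι → ℝ := Pi.single i0 1 with he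
  set u : ι → ℝ := A⁻¹ *ᵥ e with hu
  have hc : 0 < e ⬝ᵥ u := my_c_pos hA i0
  have hs : (0:ℝ) < Real.sqrt (e ⬝ᵥ u) := Real.sqrt_pos.mpr hc
  have hweq : (fun i => u i / Real.sqrt (e ⬝ᵥ u)) = (Real.sqrt (e ⬝ᵥ u))⁻¹ • u := by
    funext i
    simp [div_eq_inv_mul]
  rw [hweq, mulVec_smul, dotProduct_smul, smul_dotProduct, smul_eq_mul, smul_eq_mul,
    my_uAu hA e]
  rw [inv_mul_eq_div, inv_mul_eq_div, div_div]
  rw [← Real.sqrt_mul_self hc.le]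
  field_simp
  rw [Real.sq_sqrt (Real.sqrt_nonneg _)]

lemma my_sum_subtype {N : ℕ} (p : Fin N → Prop) [DecidablePred p] (f : Fin N → ℝ)
    (h : ∀ i, f i ≠ 0 → p i) : ∑ i, f i = ∑ i : {x // p x}, f i.1 := by
  rw [← Finset.sum_filter_of_ne (fun x _ hx => h x hx)]
  exact Finset.sum_subtype _ (by simp) f

lemma my_col_sum {N : ℕ} (S : Finset (Fin N × Fin N)) (j : Fin N)
    (M Θ : Matrix (Fin N) (Fin N) ℝ) (hMS : ∀ i, M i j ≠ 0 → (i, j) ∈ S) :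
    ∑ i, ∑ k, M i j * Θ i k * M k j =
      (fun i : colIdx S j => M i.1 j) ⬝ᵥ
        (colSub Θ S j) *ᵥ (fun i : colIdx S j => M i.1 j) := by
  rw [my_sum_subtype (fun i => (i, j) ∈ S) _ (fun i hi => hMS i (by
    intro h0
    apply hi
    refine Finset.sum_eq_zero fun k _ => by rw [h0]; ring))]
  simp only [dotProduct, mulVec, colSub, submatrix_apply, dotProduct]
  refine Finset.sum_congr rfl fun i _ => ?_
  rw [my_sum_subtype (fun k => (k, j) ∈ S) _ (fun k hk => hMS k (by
    intro h0
    apply hk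
    rw [h0]; ring))]
  rw [Finset.mul_sum]
  exact Finset.sum_congr rfl fun k _ => by ring

lemma my_trace {N : ℕ} (Θ M : Matrix (Fin N) (Fin N) ℝ) (hΘ : ∀ i k, Θ k i = Θ i k) :
    (M * Mᵀ * Θ).trace = ∑ j, ∑ i, ∑ k, M i j * Θ i k * M k j := by
  simp only [trace, diag_apply, mul_apply, transpose_apply, Finset.sum_mul]
  calc ∑ a, ∑ b, ∑ j, M a j * M b j * Θ b a
      = ∑ a, ∑ j, ∑ b, M a j * M b j * Θ b a :=
        Finset.sum_congr rfl fun a _ => Finset.sum_comm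
    _ = ∑ j, ∑ a, ∑ b, M a j * M b j * Θ b a := Finset.sum_comm
    _ = ∑ j, ∑ i, ∑ k, M i j * Θ i k * M k j := by
        refine Finset.sum_congr rfl fun j _ => Finset.sum_congr rfl fun i _ =>
          Finset.sum_congr rfl fun k _ => ?_
        rw [hΘ i k]; ring

lemma my_gaussKL_form {N : ℕ} (Θ : Matrix (Fin N) (Fin N) ℝ)
    (M : Matrix (Fin N) (Fin N) ℝ) (hΘ : ∀ i k, Θ k i = Θ i k)
    (hlt : ∀ i j : Fin N, i < j → M i j = 0) (hd : ∀ i, 0 < M i i) :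
    gaussKL Θ ((M * Mᵀ)⁻¹) =
      ((∑ j, (∑ i, ∑ k, M i j * Θ i k * M k j - 2 * Real.log (M j j)))
        - Real.log Θ.det - N) / 2 := by
  have hdet : M.det = ∏ i, M i i :=
    Matrix.det_of_lowerTriangular M (fun i j hij => hlt i j (by simpa using hij))
  have hdetpos : 0 < M.det := hdet ▸ Finset.prod_pos (fun i _ => hd i)
  have hdet2 : (M * Mᵀ).det = M.det * M.det := by rw [det_mul, det_transpose]
  have hdet2pos : 0 < (M * Mᵀ).det := hdet2 ▸ mul_pos hdetpos hdetpos
  have hunit : IsUnit (M * Mᵀ).det := isUnit_iff_ne_zero.mpr hdet2pos.ne'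
  have hinv : ((M * Mᵀ)⁻¹)⁻¹ = M * Mᵀ := Matrix.nonsing_inv_nonsing_inv _ hunit
  have hlogdet : Real.log ((M * Mᵀ)⁻¹).det = -(2 * ∑ j, Real.log (M j j)) := by
    rw [Matrix.det_nonsing_inv, Ring.inverse_eq_inv', Real.log_inv, hdet2,
      Real.log_mul hdetpos.ne' hdetpos.ne', hdet,
      Real.log_prod (fun i _ => (hd i).ne')]
    ring
  rw [gaussKL, hinv, my_trace Θ M hΘ, hlogdet, Finset.sum_sub_distrib]
  rw [Finset.mul_sum]
  ring

/-- For `Θ` symmetric positive definite and `S` a lower-triangular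
sparsity set, the matrix `L` defined columnwise by
`L_{s_j,j} = Θ_{s_j,s_j}⁻¹ e₁ / √(e₁ᵀ Θ_{s_j,s_j}⁻¹ e₁)` (zero outside `S`) belongs to the
sparsity class `𝒮`, has positive diagonal entries, and minimizes the Gaussian KL divergence
`𝒟(Θ, (L̂ L̂ᵀ)⁻¹)` over all `L̂ ∈ 𝒮` with positive diagonal entries. -/
theorem klFactor_mem_and_posDiag_and_isMinOn
    {N : ℕ} (Θ : Matrix (Fin N) (Fin N) ℝ) (hΘ : Θ.PosDef)
    (S : Finset (Fin N × Fin N))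
    (hdiag : ∀ i : Fin N, (i, i) ∈ S)
    (hlow : ∀ i j : Fin N, (i, j) ∈ S → j ≤ i) :
    (∀ i j : Fin N, klFactor Θ S hdiag i j ≠ 0 → (i, j) ∈ S) ∧
    (∀ i : Fin N, 0 < klFactor Θ S hdiag i i) ∧
    (∀ L' : Matrix (Fin N) (Fin N) ℝ,
        (∀ i j : Fin N, L' i j ≠ 0 → (i, j) ∈ S) →
        (∀ i : Fin N, 0 < L' i i) →
        gaussKL Θ ((klFactor Θ S hdiag * (klFactor Θ S hdiag)ᵀ)⁻¹) ≤
          gaussKL Θ ((L' * L'ᵀ)⁻¹)) := by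
  have hsym : ∀ i k, Θ k i = Θ i k := fun i k => by
    nth_rewrite 1 [← hΘ.isHermitian]
    simp [conjTranspose_apply]
  have hsub : ∀ j : Fin N, (colSub Θ S j).PosDef := fun j =>
    myPosDef_submatrix hΘ Subtype.val Subtype.val_injective
  -- membership
  have mem : ∀ i j : Fin N, klFactor Θ S hdiag i j ≠ 0 → (i, j) ∈ S := by
    intro i j h
    by_contra hS
    exact h (by simp [klFactor, dif_neg hS])
  -- positivity of the diagonal
  have posdiag : ∀ i : Fin N, 0 < klFactor Θ S hdiag i i := by
    intro i
    have h0 : klFactor Θ S hdiag i i =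
        ((colSub Θ S i)⁻¹ *ᵥ colE1 S i (hdiag i)) ⟨i, hdiag i⟩ /
          Real.sqrt (colE1 S i (hdiag i) ⬝ᵥ ((colSub Θ S i)⁻¹ *ᵥ colE1 S i (hdiag i))) := by
      simp only [klFactor, dif_pos (hdiag i)]
    rw [h0, colE1, my_opt_diag (hsub i) ⟨i, hdiag i⟩]
    exact Real.sqrt_pos.mpr (my_c_pos (hsub i) ⟨i, hdiag i⟩)
  refine ⟨mem, posdiag, ?_⟩
  intro L' hS' hd'
  set L := klFactor Θ S hdiag with hL
  have hLlt : ∀ i j : Fin N, i < j → L i j = 0 := by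
    intro i j hij
    by_contra h0
    exact absurd (hlow i j (mem i j h0)) (not_le.mpr hij)
  have hL'lt : ∀ i j : Fin N, i < j → L' i j = 0 := by
    intro i j hij
    by_contra h0
    exact absurd (hlow i j (hS' i j h0)) (not_le.mpr hij)
  rw [my_gaussKL_form Θ L hsym hLlt posdiag, my_gaussKL_form Θ L' hsym hL'lt hd']
  have key : ∀ j : Fin N,
      (∑ i, ∑ k, L i j * Θ i k * L k j) - 2 * Real.log (L j j) ≤
      (∑ i, ∑ k, L' i j * Θ i k * L' k j) - 2 * Real.log (L' j j) := by
    intro j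
    set A := colSub Θ S j with hA
    set e : colIdx S j → ℝ := colE1 S j (hdiag j) with he
    have heq : e = Pi.single (⟨j, hdiag j⟩ : colIdx S j) 1 := rfl
    -- value at L
    have hwL : (fun i : colIdx S j => L i.1 j) =
        fun i : colIdx S j => (A⁻¹ *ᵥ e) i / Real.sqrt (e ⬝ᵥ A⁻¹ *ᵥ e) := by
      funext i
      simp only [hL, klFactor, dif_pos i.2]
      rfl
    have hLval : (∑ i, ∑ k, L i j * Θ i k * L k j) - 2 * Real.log (L j j) =
        1 - Real.log (e ⬝ᵥ A⁻¹ *ᵥ e) := by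
      rw [my_col_sum S j L Θ (fun i => mem i j), ← hA, hwL]
      have hdj : L j j = Real.sqrt (e ⬝ᵥ A⁻¹ *ᵥ e) := by
        have h0 : L j j = (A⁻¹ *ᵥ e) ⟨j, hdiag j⟩ / Real.sqrt (e ⬝ᵥ A⁻¹ *ᵥ e) := by
          simp only [hL, klFactor, dif_pos (hdiag j)]
          rfl
        rw [h0, heq, my_opt_diag (hsub j) ⟨j, hdiag j⟩]
      rw [hdj, heq, my_opt_val (hsub j) ⟨j, hdiag j⟩, Real.log_sqrt
        (my_c_pos (hsub j) ⟨j, hdiag j⟩).le]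
      ring
    rw [hLval]
    -- lower bound at L'
    rw [my_col_sum S j L' Θ (fun i => hS' i j), ← hA]
    have := my_col_key (hsub j) (⟨j, hdiag j⟩ : colIdx S j)
      (fun i : colIdx S j => L' i.1 j) (hd' j)
    rw [← heq] at this
    exact this
  have hsum : ∑ j, ((∑ i, ∑ k, L i j * Θ i k * L k j) - 2 * Real.log (L j j)) ≤
      ∑ j, ((∑ i, ∑ k, L' i j * Θ i k * L' k j) - 2 * Real.log (L' j j)) :=
    Finset.sum_le_sum (fun j _ => key j)
  linarith

end
end

section
/- Let Θ be an N×N symmetric positive-definite real matrix, S a lower-triangular sparsity set, and L the KL-optimal factor defined by L_{s_j,j} := Θ_{s_j,s_j}⁻¹ e₁ / √(e₁ᵀ Θ_{s_j,s_j}⁻¹ e₁) and zeros outside S. Then L is the unique minimizer: for every L̂ ∈ 𝒮 with positive diagonal entries and L̂ ≠ L, one has 𝒟(Θ, (L Lᵀ)⁻¹) < 𝒟(Θ, (L̂ L̂ᵀ)⁻¹). -/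
open Matrix

noncomputable section

/-! ### Auxiliary lemmas -/

section Aux

variable {m n : Type*} [Fintype m] [Fintype n] [DecidableEq m] [DecidableEq n]

lemma sum_mul_extend (f : m → n) (hf : Function.Injective f) (x : m → ℝ) (g : n → ℝ) :
    ∑ i, Function.extend f x 0 i * g i = ∑ a, x a * g (f a) := by
  classical
  have h1 : ∑ i ∈ Finset.univ.image f, (Function.extend f x 0 i * g i)
      = ∑ a : m, Function.extend f x 0 (f a) * g (f a) :=
    Finset.sum_image (fun a _ b _ h => hf h)
  have h2 : ∑ i ∈ Finset.univ.image f, (Function.extend f x 0 i * g i)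
      = ∑ i : n, Function.extend f x 0 i * g i := by
    refine Finset.sum_subset (Finset.subset_univ _) ?_
    intro i _ hi
    have hni : ¬ ∃ a, f a = i := by
      rintro ⟨a, ha⟩
      exact hi (Finset.mem_image.mpr ⟨a, Finset.mem_univ a, ha⟩)
    rw [Function.extend_apply' _ _ _ hni]
    simp
  rw [← h2, h1]
  refine Finset.sum_congr rfl fun a _ => ?_
  rw [hf.extend_apply]

lemma posDef_submatrix_inj {M : Matrix n n ℝ} (hM : M.PosDef)
    {f : m → n} (hf : Function.Injective f) : (M.submatrix f f).PosDef := by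
  refine Matrix.PosDef.of_dotProduct_mulVec_pos (hM.1.submatrix f) fun x hx => ?_
  set y : n → ℝ := Function.extend f x 0 with hy
  have hyne : y ≠ 0 := by
    obtain ⟨a, ha⟩ := Function.ne_iff.mp hx
    intro h
    apply ha
    have := congrFun h (f a)
    simpa [hy, hf.extend_apply] using this
  have key : x ⬝ᵥ (M.submatrix f f) *ᵥ x = y ⬝ᵥ M *ᵥ y := by
    simp only [dotProduct, mulVec, Matrix.submatrix_apply]
    rw [hy, sum_mul_extend f hf x (fun i => ∑ k, M i k * Function.extend f x 0 k)]
    refine Finset.sum_congr rfl fun a _ => ?_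
    congr 1
    have : ∑ k, M (f a) k * Function.extend f x 0 k
        = ∑ k, Function.extend f x 0 k * M (f a) k := by
      refine Finset.sum_congr rfl fun k _ => mul_comm _ _
    rw [this, sum_mul_extend f hf x (fun k => M (f a) k)]
    refine Finset.sum_congr rfl fun b _ => mul_comm _ _
  have := hM.dotProduct_mulVec_pos hyne
  rw [star_trivial] at this
  rw [star_trivial, key]
  exact this

/-- The per-column optimization lemma: among vectors `v` with `v i₀ > 0`, the functional
`v ↦ vᵀ A v − 2 log (v i₀)` is uniquely minimized at `v⋆ = A⁻¹ e / √β`, where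
`e = Pi.single i₀ 1` and `β = eᵀ A⁻¹ e`, with optimal value `1 − log β`. -/
lemma col_master {A : Matrix n n ℝ} (hA : A.PosDef) (i₀ : n) :
    0 < (Pi.single i₀ 1 ⬝ᵥ A⁻¹ *ᵥ Pi.single i₀ 1) ∧
    (fun i => (A⁻¹ *ᵥ Pi.single i₀ 1) i /
        Real.sqrt (Pi.single i₀ 1 ⬝ᵥ A⁻¹ *ᵥ Pi.single i₀ 1)) i₀
      = Real.sqrt (Pi.single i₀ 1 ⬝ᵥ A⁻¹ *ᵥ Pi.single i₀ 1) ∧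
    ((fun i => (A⁻¹ *ᵥ Pi.single i₀ 1) i /
        Real.sqrt (Pi.single i₀ 1 ⬝ᵥ A⁻¹ *ᵥ Pi.single i₀ 1)) ⬝ᵥ
      A *ᵥ (fun i => (A⁻¹ *ᵥ Pi.single i₀ 1) i /
        Real.sqrt (Pi.single i₀ 1 ⬝ᵥ A⁻¹ *ᵥ Pi.single i₀ 1))
      - 2 * Real.log ((fun i => (A⁻¹ *ᵥ Pi.single i₀ 1) i /
        Real.sqrt (Pi.single i₀ 1 ⬝ᵥ A⁻¹ *ᵥ Pi.single i₀ 1)) i₀)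
      = 1 - Real.log (Pi.single i₀ 1 ⬝ᵥ A⁻¹ *ᵥ Pi.single i₀ 1)) ∧
    ∀ v : n → ℝ, 0 < v i₀ →
      (1 - Real.log (Pi.single i₀ 1 ⬝ᵥ A⁻¹ *ᵥ Pi.single i₀ 1)
          ≤ v ⬝ᵥ A *ᵥ v - 2 * Real.log (v i₀)) ∧
      ((v ≠ fun i => (A⁻¹ *ᵥ Pi.single i₀ 1) i /
          Real.sqrt (Pi.single i₀ 1 ⬝ᵥ A⁻¹ *ᵥ Pi.single i₀ 1)) →
        1 - Real.log (Pi.single i₀ 1 ⬝ᵥ A⁻¹ *ᵥ Pi.single i₀ 1)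
          < v ⬝ᵥ A *ᵥ v - 2 * Real.log (v i₀)) := by
  classical
  set e : n → ℝ := Pi.single i₀ 1 with he
  set u : n → ℝ := A⁻¹ *ᵥ e with hu
  set β : ℝ := e ⬝ᵥ u with hβdef
  have hdet : IsUnit A.det := isUnit_iff_ne_zero.mpr hA.det_pos.ne'
  have hAAinv : A * A⁻¹ = 1 := Matrix.mul_nonsing_inv A hdet
  have hAu : A *ᵥ u = e := by rw [hu, mulVec_mulVec, hAAinv, one_mulVec]
  have he0 : e ≠ 0 := by
    intro h
    have := congrFun h i₀
    simp [he] at this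
  have hβ : 0 < β := by
    have h := hA.inv.dotProduct_mulVec_pos he0
    rw [star_trivial] at h
    rw [hβdef, hu]
    exact h
  have hui₀ : u i₀ = β := by rw [hβdef, he, single_dotProduct, one_mul]
  have hsym : Aᵀ = A := by
    ext i j
    have := congrFun (congrFun hA.1 i) j
    simpa [conjTranspose_apply] using this
  have hdot : ∀ w : n → ℝ, u ⬝ᵥ A *ᵥ w = w i₀ := by
    intro w
    rw [dotProduct_mulVec, ← Matrix.mulVec_transpose, hsym, hAu, he, single_dotProduct, one_mul]
  have hsq : Real.sqrt β > 0 := Real.sqrt_pos.mpr hβ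
  have hsqsq : Real.sqrt β * Real.sqrt β = β := Real.mul_self_sqrt hβ.le
  -- value at the optimum
  have hvsi₀ : (fun i => u i / Real.sqrt β) i₀ = Real.sqrt β := by
    simp only [hui₀]
    exact Real.div_sqrt
  have hvsval : (fun i => u i / Real.sqrt β) ⬝ᵥ A *ᵥ (fun i => u i / Real.sqrt β)
      - 2 * Real.log ((fun i => u i / Real.sqrt β) i₀) = 1 - Real.log β := by
    have h1 : (fun i => u i / Real.sqrt β) = (Real.sqrt β)⁻¹ • u := by
      funext i
      simp [div_eq_inv_mul]
    have h2 : (fun i => u i / Real.sqrt β) ⬝ᵥ A *ᵥ (fun i => u i / Real.sqrt β)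
        = (Real.sqrt β)⁻¹ * ((Real.sqrt β)⁻¹ * β) := by
      rw [h1, mulVec_smul, hAu, smul_dotProduct, dotProduct_smul, smul_eq_mul, smul_eq_mul]
      simp only [he, dotProduct_single, mul_one]
      rw [hui₀]
    rw [h2, hvsi₀, Real.log_sqrt hβ.le]
    field_simp
    rw [Real.sq_sqrt hβ.le]
    ring
  refine ⟨hβ, hvsi₀, hvsval, ?_⟩
  intro v hv
  set c : ℝ := v i₀ / β with hc
  set w : n → ℝ := v - c • u with hw
  have hquad : w ⬝ᵥ A *ᵥ w = v ⬝ᵥ A *ᵥ v - (v i₀)^2 / β := by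
    have h1 : A *ᵥ w = A *ᵥ v - c • e := by
      rw [hw, mulVec_sub, mulVec_smul, hAu]
    have h2 : w ⬝ᵥ (A *ᵥ v - c • e)
        = v ⬝ᵥ A *ᵥ v - c * v i₀ - (c * v i₀) + c * (c * β) := by
      rw [hw]
      simp only [sub_dotProduct, dotProduct_sub, smul_dotProduct, dotProduct_smul, smul_eq_mul]
      rw [hdot v]
      simp only [he, dotProduct_single, mul_one]
      rw [hui₀]
      ring
    rw [h1, h2, hc]
    field_simp
    ring
  have hwpos : w ≠ 0 → 0 < w ⬝ᵥ A *ᵥ w := by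
    intro h
    have := hA.dotProduct_mulVec_pos h
    rwa [star_trivial] at this
  have hwnn : 0 ≤ w ⬝ᵥ A *ᵥ w := by
    rcases eq_or_ne w 0 with h | h
    · simp [h]
    · exact (hwpos h).le
  have hA1 : (v i₀)^2 / β ≤ v ⬝ᵥ A *ᵥ v := by linarith [hquad ▸ hwnn]
  have hlogeq : Real.log ((v i₀)^2 / β) = 2 * Real.log (v i₀) - Real.log β := by
    rw [Real.log_div (by positivity) hβ.ne', Real.log_pow]
    push_cast
    ring
  have h2 : 1 - Real.log β ≤ (v i₀)^2 / β - 2 * Real.log (v i₀) := by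
    have := Real.log_le_sub_one_of_pos (x := (v i₀)^2 / β) (by positivity)
    rw [hlogeq] at this
    linarith
  have hstrict2 : v i₀ ≠ Real.sqrt β →
      1 - Real.log β < (v i₀)^2 / β - 2 * Real.log (v i₀) := by
    intro hne
    have h1 : (v i₀)^2 / β ≠ 1 := by
      intro h
      apply hne
      have hvv : (v i₀)^2 = β := by
        field_simp at h
        linarith
      rw [← hvv, Real.sqrt_sq hv.le]
    have := Real.log_lt_sub_one_of_pos (by positivity) h1
    rw [hlogeq] at this
    linarith
  refine ⟨by linarith, ?_⟩
  intro hne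
  rcases eq_or_ne w 0 with hw0 | hw0
  · have hvc : v = c • u := by rwa [hw, sub_eq_zero] at hw0
    have hvi : v i₀ ≠ Real.sqrt β := by
      intro hveq
      apply hne
      funext i
      have hcu : c = 1 / Real.sqrt β := by
        rw [hc, hveq, div_eq_div_iff hβ.ne' hsq.ne', one_mul, hsqsq]
      have : v i = c * u i := by rw [hvc]; simp
      rw [this, hcu]
      ring
    have := hstrict2 hvi
    linarith
  · have h3 := hwpos hw0
    rw [hquad] at h3
    linarith

end Aux

/-- Restriction of a sum over `Fin N` to a sum over the column index subtype,
when the summand vanishes outside the sparsity set. -/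
lemma sum_restrict {N : ℕ} (S : Finset (Fin N × Fin N)) (j : Fin N)
    (g : Fin N → ℝ) (hg : ∀ i, (i, j) ∉ S → g i = 0) :
    ∑ i, g i = ∑ p : colIdx S j, g p.1 := by
  classical
  have h1 : ∑ i ∈ Finset.univ.filter (fun i => (i, j) ∈ S), g i = ∑ i, g i :=
    Finset.sum_filter_of_ne (fun i _ hi => by
      by_contra hm
      exact hi (hg i hm))
  rw [← h1]
  exact Finset.sum_subtype _ (fun i => by simp) g

/-- The KL divergence of `(L̂ L̂ᵀ)⁻¹` from `Θ`, for a sparse lower-triangular factor `L̂`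
with positive diagonal, decomposes as a sum of per-column functionals. -/
lemma gaussKL_factor_eq {N : ℕ} (Θ : Matrix (Fin N) (Fin N) ℝ)
    (S : Finset (Fin N × Fin N))
    (hlow : ∀ i j : Fin N, (i, j) ∈ S → j ≤ i)
    (Lh : Matrix (Fin N) (Fin N) ℝ)
    (hsp : ∀ i j : Fin N, Lh i j ≠ 0 → (i, j) ∈ S)
    (hpos : ∀ i : Fin N, 0 < Lh i i) :
    gaussKL Θ ((Lh * Lhᵀ)⁻¹) =
      ((∑ j, ((fun p : colIdx S j => Lh p.1 j) ⬝ᵥ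
            colSub Θ S j *ᵥ (fun p : colIdx S j => Lh p.1 j)
          - 2 * Real.log (Lh j j)))
        - Real.log Θ.det - (N : ℝ)) / 2 := by
  classical
  have htri : Lh.BlockTriangular OrderDual.toDual := by
    intro i j hij
    by_contra h
    exact absurd (hlow i j (hsp i j h)) (not_le.mpr hij)
  have hdetL : Lh.det = ∏ i, Lh i i := Matrix.det_of_lowerTriangular Lh htri
  have hdpos : 0 < Lh.det := by
    rw [hdetL]
    exact Finset.prod_pos fun i _ => hpos i
  have hdet2 : (Lh * Lhᵀ).det = Lh.det ^ 2 := by rw [det_mul, det_transpose, sq]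
  have hunit : IsUnit (Lh * Lhᵀ).det := isUnit_iff_ne_zero.mpr (by
    rw [hdet2]; positivity)
  have hinvinv : ((Lh * Lhᵀ)⁻¹)⁻¹ = Lh * Lhᵀ := Matrix.nonsing_inv_nonsing_inv _ hunit
  have hlogdet : Real.log ((Lh * Lhᵀ)⁻¹).det = -2 * ∑ j, Real.log (Lh j j) := by
    rw [Matrix.det_nonsing_inv, Ring.inverse_eq_inv', Real.log_inv, hdet2, Real.log_pow, hdetL,
      Real.log_prod (fun i _ => (hpos i).ne')]
    push_cast
    ring
  have htrace : ((Lh * Lhᵀ) * Θ).trace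
      = ∑ j, (fun p : colIdx S j => Lh p.1 j) ⬝ᵥ
          colSub Θ S j *ᵥ (fun p : colIdx S j => Lh p.1 j) := by
    rw [← Matrix.trace_mul_cycle Lhᵀ Θ Lh, Matrix.trace]
    refine Finset.sum_congr rfl fun j _ => ?_
    have hterm : (Lhᵀ * Θ * Lh).diag j = ∑ i, ∑ k, Lh i j * Θ i k * Lh k j := by
      simp only [Matrix.diag_apply, Matrix.mul_apply, transpose_apply, Finset.sum_mul]
      rw [Finset.sum_comm]
    rw [hterm]
    have houter : ∑ i, ∑ k, Lh i j * Θ i k * Lh k j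
        = ∑ p : colIdx S j, ∑ k, Lh p.1 j * Θ p.1 k * Lh k j := by
      refine sum_restrict S j _ fun i hi => ?_
      have : Lh i j = 0 := by
        by_contra h
        exact hi (hsp i j h)
      simp [this]
    have hinner : ∀ p : colIdx S j, ∑ k, Lh p.1 j * Θ p.1 k * Lh k j
        = ∑ q : colIdx S j, Lh p.1 j * Θ p.1 q.1 * Lh q.1 j := by
      intro p
      refine sum_restrict S j _ fun k hk => ?_
      have : Lh k j = 0 := by
        by_contra h
        exact hk (hsp k j h)
      simp [this]
    rw [houter]
    rw [Finset.sum_congr rfl fun p _ => hinner p]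
    simp only [dotProduct, mulVec, colSub, Matrix.submatrix_apply, Finset.mul_sum]
    refine Finset.sum_congr rfl fun p _ => Finset.sum_congr rfl fun q _ => by ring
  rw [gaussKL, hinvinv, htrace, hlogdet, Finset.sum_sub_distrib, ← Finset.mul_sum]
  ring

/-- The KL-optimal factor `L` is the unique minimizer: for every
`L̂ ∈ 𝒮` with positive diagonal entries and `L̂ ≠ L`, the KL divergence at `L̂` is
strictly larger than at `L`. -/
theorem klFactor_unique_minimizer
    {N : ℕ} (Θ : Matrix (Fin N) (Fin N) ℝ) (hΘ : Θ.PosDef)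
    (S : Finset (Fin N × Fin N))
    (hdiag : ∀ i : Fin N, (i, i) ∈ S)
    (hlow : ∀ i j : Fin N, (i, j) ∈ S → j ≤ i) :
    ∀ L' : Matrix (Fin N) (Fin N) ℝ,
      (∀ i j : Fin N, L' i j ≠ 0 → (i, j) ∈ S) →
      (∀ i : Fin N, 0 < L' i i) →
      L' ≠ klFactor Θ S hdiag →
      gaussKL Θ ((klFactor Θ S hdiag * (klFactor Θ S hdiag)ᵀ)⁻¹) <
        gaussKL Θ ((L' * L'ᵀ)⁻¹) := by
  intro L' hsp' hpos' hne
  classical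
  have hA : ∀ j : Fin N, (colSub Θ S j).PosDef := fun j =>
    posDef_submatrix_inj hΘ Subtype.val_injective
  set L := klFactor Θ S hdiag with hL
  have hcolL : ∀ (j : Fin N) (p : colIdx S j),
      L p.1 j = ((colSub Θ S j)⁻¹ *ᵥ Pi.single (⟨j, hdiag j⟩ : colIdx S j) 1) p /
        Real.sqrt (Pi.single (⟨j, hdiag j⟩ : colIdx S j) 1 ⬝ᵥ
          (colSub Θ S j)⁻¹ *ᵥ Pi.single (⟨j, hdiag j⟩ : colIdx S j) 1) := by
    intro j p
    exact dif_pos p.2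
  have hzeroL : ∀ i j : Fin N, L i j ≠ 0 → (i, j) ∈ S := by
    intro i j h
    by_contra hm
    exact h (dif_neg hm)
  have hdiagL : ∀ j : Fin N, 0 < L j j := by
    intro j
    obtain ⟨hβ, hvs, _, _⟩ := col_master (hA j) (⟨j, hdiag j⟩ : colIdx S j)
    have h : L j j = Real.sqrt (Pi.single (⟨j, hdiag j⟩ : colIdx S j) 1 ⬝ᵥ
        (colSub Θ S j)⁻¹ *ᵥ Pi.single (⟨j, hdiag j⟩ : colIdx S j) 1) :=
      (hcolL j ⟨j, hdiag j⟩).trans hvs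
    rw [h]
    exact Real.sqrt_pos.mpr hβ
  have hEL := gaussKL_factor_eq Θ S hlow L hzeroL hdiagL
  have hEL' := gaussKL_factor_eq Θ S hlow L' hsp' hpos'
  rw [hEL, hEL']
  have key : ∀ j : Fin N,
      (((fun p : colIdx S j => L p.1 j) ⬝ᵥ
          colSub Θ S j *ᵥ fun p : colIdx S j => L p.1 j) - 2 * Real.log (L j j)
        ≤ ((fun p : colIdx S j => L' p.1 j) ⬝ᵥ
          colSub Θ S j *ᵥ fun p : colIdx S j => L' p.1 j) - 2 * Real.log (L' j j))
      ∧ ((fun p : colIdx S j => L' p.1 j) ≠ (fun p : colIdx S j => L p.1 j) →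
        ((fun p : colIdx S j => L p.1 j) ⬝ᵥ
          colSub Θ S j *ᵥ fun p : colIdx S j => L p.1 j) - 2 * Real.log (L j j)
        < ((fun p : colIdx S j => L' p.1 j) ⬝ᵥ
          colSub Θ S j *ᵥ fun p : colIdx S j => L' p.1 j) - 2 * Real.log (L' j j)) := by
    intro j
    obtain ⟨hβ, hvs, hval, hbound⟩ := col_master (hA j) (⟨j, hdiag j⟩ : colIdx S j)
    have hfun : (fun p : colIdx S j => L p.1 j)
        = (fun p => ((colSub Θ S j)⁻¹ *ᵥ Pi.single (⟨j, hdiag j⟩ : colIdx S j) 1) p /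
            Real.sqrt (Pi.single (⟨j, hdiag j⟩ : colIdx S j) 1 ⬝ᵥ
              (colSub Θ S j)⁻¹ *ᵥ Pi.single (⟨j, hdiag j⟩ : colIdx S j) 1)) :=
      funext (hcolL j)
    have hLjj : L j j = (fun p : colIdx S j => L p.1 j) ⟨j, hdiag j⟩ := rfl
    have hvalL : ((fun p : colIdx S j => L p.1 j) ⬝ᵥ
        colSub Θ S j *ᵥ fun p : colIdx S j => L p.1 j) - 2 * Real.log (L j j)
        = 1 - Real.log (Pi.single (⟨j, hdiag j⟩ : colIdx S j) 1 ⬝ᵥ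
            (colSub Θ S j)⁻¹ *ᵥ Pi.single (⟨j, hdiag j⟩ : colIdx S j) 1) := by
      rw [hLjj, hfun]
      exact hval
    have hp : 0 < (fun p : colIdx S j => L' p.1 j) ⟨j, hdiag j⟩ := hpos' j
    have hb := hbound (fun p : colIdx S j => L' p.1 j) hp
    constructor
    · rw [hvalL]
      exact hb.1
    · intro hne'
      rw [hvalL]
      refine hb.2 ?_
      rw [hfun] at hne'
      exact hne'
  have hex : ∃ j : Fin N,
      (fun p : colIdx S j => L' p.1 j) ≠ (fun p : colIdx S j => L p.1 j) := by
    by_contra h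
    push_neg at h
    apply hne
    ext i j
    by_cases hij : (i, j) ∈ S
    · exact congrFun (h j) ⟨i, hij⟩
    · have h1 : L' i j = 0 := by
        by_contra h0
        exact hij (hsp' i j h0)
      have h2 : L i j = 0 := dif_neg hij
      rw [h1, h2]
  obtain ⟨j₀, hj₀⟩ := hex
  have hsum := Finset.sum_lt_sum (s := Finset.univ)
    (f := fun j : Fin N => ((fun p : colIdx S j => L p.1 j) ⬝ᵥ
          colSub Θ S j *ᵥ fun p : colIdx S j => L p.1 j) - 2 * Real.log (L j j))
    (g := fun j : Fin N => ((fun p : colIdx S j => L' p.1 j) ⬝ᵥ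
          colSub Θ S j *ᵥ fun p : colIdx S j => L' p.1 j) - 2 * Real.log (L' j j))
    (fun j _ => (key j).1) ⟨j₀, Finset.mem_univ j₀, (key j₀).2 hj₀⟩
  linarith

end
end

section
/- Let Θ be an N×N symmetric positive-definite real matrix and S a lower-triangular sparsity set. Then for every L̂ ∈ 𝒮 with positive diagonal entries, the KL objective decomposes column-wise: 2·𝒟(Θ, (L̂ L̂ᵀ)⁻¹) = Σ_{j=1}^{N} ( L̂_{s_j,j}ᵀ Θ_{s_j,s_j} L̂_{s_j,j} − 2 log L̂_{jj} ) − log det Θ − N, where L̂_{s_j,j} ∈ ℝ^{s_j} denotes the vector of (possibly) nonzero entries of the j-th column of L̂. -/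
open Matrix

noncomputable section

lemma restrict_sum {N : ℕ} (S : Finset (Fin N × Fin N)) (j : Fin N)
    (L' : Matrix (Fin N) (Fin N) ℝ) (hsp : ∀ i j : Fin N, L' i j ≠ 0 → (i, j) ∈ S)
    (h : Fin N → ℝ) :
    ∑ k : colIdx S j, h k.val * L' k.val j = ∑ k : Fin N, h k * L' k j := by
  classical
  rw [← Finset.sum_subtype (Finset.univ.filter (fun k => (k, j) ∈ S))
      (by simp) (fun k => h k * L' k j)]
  exact Finset.sum_filter_of_ne (fun k _ hk => hsp k j (fun h0 => hk (by rw [h0, mul_zero])))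

lemma col_dot {N : ℕ} (Θ : Matrix (Fin N) (Fin N) ℝ) (S : Finset (Fin N × Fin N)) (j : Fin N)
    (L' : Matrix (Fin N) (Fin N) ℝ) (hsp : ∀ i j : Fin N, L' i j ≠ 0 → (i, j) ∈ S) :
    (fun i : colIdx S j => L' i.val j) ⬝ᵥ
        (colSub Θ S j *ᵥ fun i : colIdx S j => L' i.val j)
      = ∑ i : Fin N, (∑ k : Fin N, Θ i k * L' k j) * L' i j := by
  simp only [dotProduct, Matrix.mulVec, colSub, Matrix.submatrix_apply]
  calc (∑ i : colIdx S j, L' i.val j * ∑ k : colIdx S j, Θ i.val k.val * L' k.val j)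
      = ∑ i : colIdx S j, (∑ k : Fin N, Θ i.val k * L' k j) * L' i.val j := by
        refine Finset.sum_congr rfl fun i _ => ?_
        rw [restrict_sum S j L' hsp (Θ i.val), mul_comm]
    _ = _ := restrict_sum S j L' hsp (fun i => ∑ k : Fin N, Θ i k * L' k j)

/-- Columnwise decomposition of the KL objective: for every `L̂ ∈ 𝒮`
with positive diagonal entries,
`2 𝒟(Θ, (L̂L̂ᵀ)⁻¹) = Σ_j ( L̂_{s_j,j}ᵀ Θ_{s_j,s_j} L̂_{s_j,j} − 2 log L̂_{jj} ) − log det Θ − N`. -/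
theorem gaussKL_columnwise_decomposition
    {N : ℕ} (Θ : Matrix (Fin N) (Fin N) ℝ) (hΘ : Θ.PosDef)
    (S : Finset (Fin N × Fin N))
    (hdiag : ∀ i : Fin N, (i, i) ∈ S)
    (hlow : ∀ i j : Fin N, (i, j) ∈ S → j ≤ i)
    (L' : Matrix (Fin N) (Fin N) ℝ)
    (hsp : ∀ i j : Fin N, L' i j ≠ 0 → (i, j) ∈ S)
    (hpos : ∀ i : Fin N, 0 < L' i i) :
    2 * gaussKL Θ ((L' * L'ᵀ)⁻¹) =
      (∑ j : Fin N,
        ((fun i : colIdx S j => L' i.val j) ⬝ᵥ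
            (colSub Θ S j *ᵥ fun i : colIdx S j => L' i.val j)
          - 2 * Real.log (L' j j)))
      - Real.log Θ.det - (N : ℝ) := by
  classical
  have hdL : L'.det = ∏ i, L' i i :=
    Matrix.det_of_lowerTriangular L' (fun i j hij => by
      by_contra h0
      exact absurd (hlow _ _ (hsp _ _ h0)) (not_le.mpr hij))
  have hdpos : 0 < L'.det := hdL ▸ Finset.prod_pos (fun i _ => hpos i)
  have hd0 : L'.det ≠ 0 := ne_of_gt hdpos
  have hdetLL : (L' * L'ᵀ).det = L'.det * L'.det := by rw [det_mul, det_transpose]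
  have hu : IsUnit (L' * L'ᵀ).det := by
    rw [hdetLL]; exact isUnit_iff_ne_zero.mpr (mul_ne_zero hd0 hd0)
  have hinv : ((L' * L'ᵀ)⁻¹)⁻¹ = L' * L'ᵀ := Matrix.nonsing_inv_nonsing_inv _ hu
  have hdetinv : ((L' * L'ᵀ)⁻¹).det = ((L' * L'ᵀ).det)⁻¹ := by
    rw [Matrix.det_nonsing_inv, Ring.inverse_eq_inv']
  have hlogdet : Real.log ((L' * L'ᵀ)⁻¹).det = -(2 * ∑ j : Fin N, Real.log (L' j j)) := by
    rw [hdetinv, Real.log_inv, hdetLL, Real.log_mul hd0 hd0, hdL,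
      Real.log_prod (fun i _ => ne_of_gt (hpos i))]
    ring
  have htr : (L' * L'ᵀ * Θ).trace = ∑ j : Fin N, ∑ i : Fin N, (∑ k : Fin N, Θ i k * L' k j) * L' i j := by
    rw [← Matrix.trace_mul_cycle L'ᵀ Θ L']
    simp only [Matrix.trace, Matrix.diag, Matrix.mul_apply, Matrix.transpose_apply,
      Finset.sum_mul]
    refine Finset.sum_congr rfl fun j _ => ?_
    rw [Finset.sum_comm]
    refine Finset.sum_congr rfl fun i _ => Finset.sum_congr rfl fun k _ => by ring
  have hcols : ∀ j : Fin N,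
      (fun i : colIdx S j => L' i.val j) ⬝ᵥ
          (colSub Θ S j *ᵥ fun i : colIdx S j => L' i.val j)
        = ∑ i : Fin N, (∑ k : Fin N, Θ i k * L' k j) * L' i j :=
    fun j => col_dot Θ S j L' hsp
  have hsum : (∑ j : Fin N,
      ((fun i : colIdx S j => L' i.val j) ⬝ᵥ
          (colSub Θ S j *ᵥ fun i : colIdx S j => L' i.val j)
        - 2 * Real.log (L' j j)))
      = (L' * L'ᵀ * Θ).trace - 2 * ∑ j : Fin N, Real.log (L' j j) := by
    rw [Finset.sum_sub_distrib, htr, Finset.mul_sum]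
    refine congrArg₂ _ (Finset.sum_congr rfl fun j _ => hcols j) rfl
  rw [hsum]
  unfold gaussKL
  rw [hinv, hlogdet]
  ring


end
end

section
/- Let Θ be an N×N symmetric positive-definite real matrix, S a lower-triangular sparsity set, and L the KL-optimal factor defined by L_{s_j,j} := Θ_{s_j,s_j}⁻¹ e₁ / √(e₁ᵀ Θ_{s_j,s_j}⁻¹ e₁) and zeros outside S. Then the minimal KL divergence has the closed form 2·𝒟(Θ, (L Lᵀ)⁻¹) = − Σ_{j=1}^{N} log( e₁ᵀ Θ_{s_j,s_j}⁻¹ e₁ ) − log det Θ. -/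
open Matrix

noncomputable section

/-- Summing a function vanishing outside `s_j` over `Fin N` equals summing over `colIdx`. -/
lemma sum_colIdx {N : ℕ} (S : Finset (Fin N × Fin N)) (j : Fin N) (g : Fin N → ℝ)
    (hg : ∀ i, (i, j) ∉ S → g i = 0) :
    ∑ i : Fin N, g i = ∑ i : colIdx S j, g i.val := by
  rw [← Finset.sum_subtype (Finset.univ.filter fun i : Fin N => (i, j) ∈ S)
      (fun x => by simp) g]
  exact (Finset.sum_filter_of_ne (fun i _ h => by
    by_contra hc; exact h (hg i hc))).symm

/-- Quadratic form of the extension-by-zero equals the submatrix quadratic form. -/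
lemma quad_colIdx {N : ℕ} (Θ : Matrix (Fin N) (Fin N) ℝ) (S : Finset (Fin N × Fin N))
    (j : Fin N) (x : colIdx S j → ℝ) :
    (fun i => if h : (i, j) ∈ S then x ⟨i, h⟩ else 0) ⬝ᵥ
      (Θ *ᵥ fun i => if h : (i, j) ∈ S then x ⟨i, h⟩ else 0) =
    x ⬝ᵥ (colSub Θ S j *ᵥ x) := by
  set y : Fin N → ℝ := fun i => if h : (i, j) ∈ S then x ⟨i, h⟩ else 0 with hy
  have hy0 : ∀ i, (i, j) ∉ S → y i = 0 := fun i hi => dif_neg hi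
  have hyv : ∀ i : colIdx S j, y i.val = x i := fun i => by
    simp only [hy]; rw [dif_pos i.2]
  simp only [dotProduct, mulVec, colSub, submatrix_apply]
  rw [sum_colIdx S j _ (fun i hi => by rw [hy0 i hi, zero_mul])]
  refine Finset.sum_congr rfl fun i _ => ?_
  rw [hyv]
  congr 1
  rw [sum_colIdx S j _ (fun k hk => by rw [hy0 k hk, mul_zero])]
  exact Finset.sum_congr rfl fun k _ => by rw [hyv]

lemma colSub_posDef {N : ℕ} {Θ : Matrix (Fin N) (Fin N) ℝ} (hΘ : Θ.PosDef)
    (S : Finset (Fin N × Fin N)) (j : Fin N) : (colSub Θ S j).PosDef := by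
  refine PosDef.of_dotProduct_mulVec_pos (hΘ.isHermitian.submatrix _) fun x hx => ?_
  set y : Fin N → ℝ := fun i => if h : (i, j) ∈ S then x ⟨i, h⟩ else 0 with hy
  have hyne : y ≠ 0 := by
    obtain ⟨i, hi⟩ := Function.ne_iff.mp hx
    intro h
    apply hi
    have := congrFun h i.val
    simpa only [hy, dif_pos i.2, Pi.zero_apply, Subtype.coe_eta] using this
  have h := hΘ.dotProduct_mulVec_pos hyne
  rw [star_trivial] at h
  rw [star_trivial, ← quad_colIdx Θ S j x]
  exact h

/-- Closed form of the minimal KL divergence attained by the KL-optimal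
factor `L`: `2 𝒟(Θ, (L Lᵀ)⁻¹) = − Σ_j log( e₁ᵀ Θ_{s_j,s_j}⁻¹ e₁ ) − log det Θ`. -/
theorem gaussKL_klFactor_closed_form
    {N : ℕ} (Θ : Matrix (Fin N) (Fin N) ℝ) (hΘ : Θ.PosDef)
    (S : Finset (Fin N × Fin N))
    (hdiag : ∀ i : Fin N, (i, i) ∈ S)
    (hlow : ∀ i j : Fin N, (i, j) ∈ S → j ≤ i) :
    2 * gaussKL Θ ((klFactor Θ S hdiag * (klFactor Θ S hdiag)ᵀ)⁻¹) =
      - (∑ j : Fin N,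
          Real.log (colE1 S j (hdiag j) ⬝ᵥ ((colSub Θ S j)⁻¹ *ᵥ colE1 S j (hdiag j))))
      - Real.log Θ.det := by
  set L := klFactor Θ S hdiag with hL
  set a : Fin N → ℝ := fun j =>
    colE1 S j (hdiag j) ⬝ᵥ ((colSub Θ S j)⁻¹ *ᵥ colE1 S j (hdiag j)) with ha
  have hMpd : ∀ j, (colSub Θ S j).PosDef := colSub_posDef hΘ S
  have hMinv : ∀ j, ((colSub Θ S j)⁻¹).PosDef := fun j => (hMpd j).inv
  have hapos : ∀ j, 0 < a j := by
    intro j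
    have he : colE1 S j (hdiag j) ≠ 0 := by
      intro h
      have := congrFun h ⟨j, hdiag j⟩
      simp [colE1, Pi.single_eq_same] at this
    have := (hMinv j).dotProduct_mulVec_pos he
    rwa [star_trivial] at this
  have hsq : ∀ j, Real.sqrt (a j) ≠ 0 := fun j => Real.sqrt_ne_zero'.mpr (hapos j)
  -- diagonal entries of L
  have hdiagL : ∀ j, L j j = Real.sqrt (a j) := by
    intro j
    have h1 : ((colSub Θ S j)⁻¹ *ᵥ colE1 S j (hdiag j)) ⟨j, hdiag j⟩ = a j := by
      rw [ha]
      simp only [colE1, single_dotProduct, one_mul]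
    rw [hL, klFactor, dif_pos (hdiag j), h1]
    exact Real.div_sqrt
  -- L is lower triangular
  have htri : L.BlockTriangular OrderDual.toDual := by
    intro i j hij
    have : i < j := hij
    rw [hL, klFactor, dif_neg]
    intro hS
    exact absurd (hlow i j hS) (not_le.mpr this)
  have hdetL : L.det = ∏ j, Real.sqrt (a j) := by
    rw [Matrix.det_of_lowerTriangular L htri]
    exact Finset.prod_congr rfl fun j _ => hdiagL j
  have hdetP : (L * Lᵀ).det = ∏ j, a j := by
    rw [Matrix.det_mul, Matrix.det_transpose, hdetL, ← Finset.prod_mul_distrib]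
    exact Finset.prod_congr rfl fun j _ => Real.mul_self_sqrt (hapos j).le
  have hprodpos : 0 < ∏ j, a j := Finset.prod_pos fun j _ => hapos j
  have hdetne : (L * Lᵀ).det ≠ 0 := by rw [hdetP]; exact hprodpos.ne'
  -- trace computation
  have htrace : ((L * Lᵀ) * Θ).trace = (N : ℝ) := by
    have h1 : ((L * Lᵀ) * Θ).trace = (Lᵀ * Θ * L).trace := by
      rw [Matrix.trace_mul_cycle, Matrix.trace_mul_cycle]
    rw [h1]
    have h2 : ∀ j : Fin N, (Lᵀ * Θ * L) j j = 1 := by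
      intro j
      set v : colIdx S j → ℝ := fun i =>
        ((colSub Θ S j)⁻¹ *ᵥ colE1 S j (hdiag j)) i / Real.sqrt (a j) with hv
      have hLcol : ∀ i : Fin N, L i j = if h : (i, j) ∈ S then v ⟨i, h⟩ else 0 := by
        intro i
        rfl
      have hentry : (Lᵀ * Θ * L) j j =
          (fun i => if h : (i, j) ∈ S then v ⟨i, h⟩ else 0) ⬝ᵥ
            (Θ *ᵥ fun i => if h : (i, j) ∈ S then v ⟨i, h⟩ else 0) := by
        simp only [Matrix.mul_apply, Matrix.transpose_apply, dotProduct, mulVec, hLcol,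
          Finset.sum_mul, Finset.mul_sum]
        rw [Finset.sum_comm]
        exact Finset.sum_congr rfl fun i _ => Finset.sum_congr rfl fun k _ => by ring
      rw [hentry, quad_colIdx]
      -- v ⬝ᵥ (M *ᵥ v) = 1
      set M := colSub Θ S j with hM
      set w : colIdx S j → ℝ := M⁻¹ *ᵥ colE1 S j (hdiag j) with hw
      have hvw : v = (Real.sqrt (a j))⁻¹ • w := by
        funext i
        simp [hv, hw, div_eq_inv_mul, Pi.smul_apply, smul_eq_mul]
      have hMw : M *ᵥ w = colE1 S j (hdiag j) := by
        rw [hw, mulVec_mulVec, Matrix.mul_nonsing_inv _ ((hMpd j).det_pos.ne').isUnit,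
          one_mulVec]
      have hwMw : w ⬝ᵥ (M *ᵥ w) = a j := by
        rw [hMw, dotProduct_comm, ha, hw, hM]
      rw [hvw, smul_dotProduct, mulVec_smul, dotProduct_smul, hwMw,
        smul_eq_mul, smul_eq_mul]
      rw [← mul_assoc, ← mul_inv]
      rw [Real.mul_self_sqrt (hapos j).le]
      exact inv_mul_cancel₀ (hapos j).ne'
    rw [Matrix.trace]
    simp only [Matrix.diag_apply]
    rw [Finset.sum_congr rfl fun j _ => h2 j]
    simp
  -- log det of inverse
  have hlogdet : Real.log ((L * Lᵀ)⁻¹).det = -∑ j, Real.log (a j) := by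
    rw [Matrix.det_nonsing_inv, Ring.inverse_eq_inv', Real.log_inv, hdetP,
      Real.log_prod fun j _ => (hapos j).ne']
  have hinvinv : ((L * Lᵀ)⁻¹)⁻¹ = L * Lᵀ :=
    Matrix.nonsing_inv_nonsing_inv _ (Ne.isUnit hdetne)
  rw [gaussKL, hinvinv, htrace, hlogdet]
  ring
end
end

section
/- Let Θ be an N×N symmetric positive-definite real matrix with smallest eigenvalue λ_min and largest eigenvalue λ_max, set A := Θ⁻¹, and let L be any invertible N×N real matrix with L Lᵀ = A. Then for every N×N real matrix M, λ_min · ‖A − M Mᵀ‖_F ≤ ‖Id − L⁻¹ M Mᵀ L⁻ᵀ‖_F ≤ λ_max · ‖A − M Mᵀ‖_F. -/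
open Matrix

noncomputable section

/-- The Frobenius norm `‖X‖_F = √(Σ_{i,j} X_{ij}²)` of a real matrix. -/
def frobNorm {n m : Type*} [Fintype n] [Fintype m] (X : Matrix n m ℝ) : ℝ :=
  Real.sqrt (∑ i : n, ∑ j : m, (X i j) ^ 2)

lemma frobSq_eq_trace {n : Type*} [Fintype n] (X : Matrix n n ℝ) :
    ∑ i : n, ∑ j : n, (X i j) ^ 2 = trace (X * Xᵀ) := by
  simp [Matrix.trace, Matrix.mul_apply, Matrix.diag, sq]

lemma trace_diag_diag {n : Type*} [Fintype n] [DecidableEq n]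
    (E : Matrix n n ℝ) (d : n → ℝ) :
    trace (E * diagonal d * (E * diagonal d)) = ∑ i, ∑ j, d i * d j * (E i j * E j i) := by
  simp [Matrix.trace, Matrix.mul_apply, Matrix.diag, Matrix.diagonal, Finset.mul_sum,
    Finset.sum_mul]
  rw [Finset.sum_comm]
  congr 1; ext i; congr 1; ext j; ring

lemma conj_mul_conj {n : Type*} [Fintype n] [DecidableEq n] (U A B : Matrix n n ℝ) (h : Uᵀ * U = 1) :
    (U * A * Uᵀ) * (U * B * Uᵀ) = U * (A * B) * Uᵀ := by
  have h1 : (U * A * Uᵀ) * (U * B * Uᵀ) = U * A * (Uᵀ * U) * (B * Uᵀ) := by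
    simp only [mul_assoc]
  rw [h1, h, mul_one]; simp only [mul_assoc]

lemma trace_conj {n : Type*} [Fintype n] [DecidableEq n] (U A : Matrix n n ℝ) (h : Uᵀ * U = 1) :
    trace (U * A * Uᵀ) = trace A := by
  rw [Matrix.trace_mul_comm, ← mul_assoc, h, one_mul]

/-- Let `Θ` be symmetric positive definite with smallest eigenvalue
`λ_min` and largest eigenvalue `λ_max`, `A = Θ⁻¹`, and `L` invertible with `L Lᵀ = A`.
Then for every matrix `M`,
`λ_min ‖A − MMᵀ‖_F ≤ ‖Id − L⁻¹ M Mᵀ L⁻ᵀ‖_F ≤ λ_max ‖A − MMᵀ‖_F`. -/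
theorem frobNorm_conj_bounds
    {N : ℕ} (Θ : Matrix (Fin N) (Fin N) ℝ) (hΘ : Θ.PosDef)
    (lmin lmax : ℝ)
    (hmin : IsLeast (Set.range hΘ.isHermitian.eigenvalues) lmin)
    (hmax : IsGreatest (Set.range hΘ.isHermitian.eigenvalues) lmax)
    (L : Matrix (Fin N) (Fin N) ℝ) (hL : IsUnit L.det)
    (hLL : L * Lᵀ = Θ⁻¹)
    (M : Matrix (Fin N) (Fin N) ℝ) :
    lmin * frobNorm (Θ⁻¹ - M * Mᵀ) ≤
        frobNorm (1 - L⁻¹ * (M * Mᵀ) * (Lᵀ)⁻¹) ∧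
      frobNorm (1 - L⁻¹ * (M * Mᵀ) * (Lᵀ)⁻¹) ≤
        lmax * frobNorm (Θ⁻¹ - M * Mᵀ) := by
  have hLT : IsUnit Lᵀ.det := by rwa [Matrix.det_transpose]
  have hLinv : L⁻¹ * L = 1 := Matrix.nonsing_inv_mul L hL
  have hLinv' : Lᵀ * (Lᵀ)⁻¹ = 1 := Matrix.mul_nonsing_inv Lᵀ hLT
  set D : Matrix (Fin N) (Fin N) ℝ := Θ⁻¹ - M * Mᵀ with hD
  set X : Matrix (Fin N) (Fin N) ℝ := 1 - L⁻¹ * (M * Mᵀ) * (Lᵀ)⁻¹ with hX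
  -- X = L⁻¹ * D * (Lᵀ)⁻¹
  have hXD : X = L⁻¹ * D * (Lᵀ)⁻¹ := by
    have h1 : L⁻¹ * Θ⁻¹ * (Lᵀ)⁻¹ = 1 := by
      rw [← hLL, ← mul_assoc, mul_assoc (L⁻¹ * L), hLinv', mul_one, hLinv]
    rw [hX, hD, Matrix.mul_sub, Matrix.sub_mul, h1]
  -- Θ = (Lᵀ)⁻¹ * L⁻¹
  have hΘdet : IsUnit Θ.det := isUnit_iff_ne_zero.2 (ne_of_gt hΘ.det_pos)
  have hΘLL : Θ = (Lᵀ)⁻¹ * L⁻¹ := by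
    rw [← Matrix.mul_inv_rev, hLL, Matrix.nonsing_inv_nonsing_inv Θ hΘdet]
  -- D is symmetric
  have hΘsym : Θᵀ = Θ := by
    have := hΘ.isHermitian.eq
    rwa [← Matrix.conjTranspose_eq_transpose_of_trivial]
  have hDsym : Dᵀ = D := by
    rw [hD, Matrix.transpose_sub, Matrix.transpose_nonsing_inv, hΘsym,
      Matrix.transpose_mul, Matrix.transpose_transpose]
  -- trace identity: trace (X * Xᵀ) = trace (D * Θ * (D * Θ))
  have hXt : Xᵀ = L⁻¹ * D * (Lᵀ)⁻¹ := by
    rw [hXD, Matrix.transpose_mul, Matrix.transpose_mul, hDsym,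
      Matrix.transpose_nonsing_inv, Matrix.transpose_nonsing_inv,
      Matrix.transpose_transpose, mul_assoc]
  have htraceX : trace (X * Xᵀ) = trace (D * Θ * (D * Θ)) := by
    rw [hXt, hXD]
    have h2 : L⁻¹ * D * (Lᵀ)⁻¹ * (L⁻¹ * D * (Lᵀ)⁻¹) = L⁻¹ * (D * Θ * D * (Lᵀ)⁻¹) := by
      rw [hΘLL]; simp only [mul_assoc]
    rw [h2, Matrix.trace_mul_comm]
    rw [hΘLL]; simp only [mul_assoc]
  -- spectral decomposition
  set U : Matrix (Fin N) (Fin N) ℝ := (hΘ.isHermitian.eigenvectorUnitary : Matrix (Fin N) (Fin N) ℝ)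
    with hU
  set lam : Fin N → ℝ := hΘ.isHermitian.eigenvalues with hlam
  have hUU : Uᵀ * U = 1 := by
    have := (Matrix.mem_unitaryGroup_iff').mp hΘ.isHermitian.eigenvectorUnitary.2
    rwa [← Matrix.conjTranspose_eq_transpose_of_trivial]
  have hUU' : U * Uᵀ = 1 := by
    have := (Matrix.mem_unitaryGroup_iff).mp hΘ.isHermitian.eigenvectorUnitary.2
    rwa [← Matrix.conjTranspose_eq_transpose_of_trivial]
  have hspec : Θ = U * diagonal lam * Uᵀ := by
    have := hΘ.isHermitian.spectral_theorem
    simpa [Function.comp, Matrix.star_eq_conjTranspose, ← Matrix.conjTranspose_eq_transpose_of_trivial] using this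
  set E : Matrix (Fin N) (Fin N) ℝ := Uᵀ * D * U with hE
  have hDE : D = U * E * Uᵀ := by
    rw [hE]
    rw [show U * (Uᵀ * D * U) * Uᵀ = U * Uᵀ * D * (U * Uᵀ) by simp only [mul_assoc],
      hUU', one_mul, mul_one]
  have hEsym : Eᵀ = E := by
    rw [hE, Matrix.transpose_mul, Matrix.transpose_mul, hDsym, Matrix.transpose_transpose,
      mul_assoc]
  have hEji : ∀ i j, E j i = E i j := fun i j => by
    have h := congrFun (congrFun hEsym j) i
    rw [Matrix.transpose_apply] at h
    exact h.symm
  have hDΘ : D * Θ = U * (E * diagonal lam) * Uᵀ := by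
    rw [hspec]
    conv_lhs => rw [hDE]
    rw [conj_mul_conj U E (diagonal lam) hUU]
  have htr1 : trace (D * Θ * (D * Θ)) = ∑ i, ∑ j, lam i * lam j * (E i j)^2 := by
    rw [hDΘ, conj_mul_conj U _ _ hUU, trace_conj _ _ hUU, trace_diag_diag]
    refine Finset.sum_congr rfl fun i _ => Finset.sum_congr rfl fun j _ => ?_
    rw [hEji i j]; ring
  have htr2 : trace (D * Dᵀ) = ∑ i, ∑ j, (E i j)^2 := by
    rw [hDsym]
    conv_lhs => rw [hDE]
    rw [conj_mul_conj U E E hUU, trace_conj _ _ hUU]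
    simp only [Matrix.trace, Matrix.mul_apply, Matrix.diag]
    refine Finset.sum_congr rfl fun i _ => Finset.sum_congr rfl fun j _ => ?_
    rw [hEji i j]; ring
  -- eigenvalue bounds
  have hminpos : 0 < lmin := by
    obtain ⟨i, hi⟩ := hmin.1
    rw [← hi]; exact hΘ.eigenvalues_pos i
  have hlb : ∀ i, lmin ≤ lam i := fun i => hmin.2 ⟨i, rfl⟩
  have hub : ∀ i, lam i ≤ lmax := fun i => hmax.2 ⟨i, rfl⟩
  -- sum bounds
  have hsumlb : lmin^2 * (∑ i, ∑ j, (E i j)^2) ≤ ∑ i, ∑ j, lam i * lam j * (E i j)^2 := by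
    rw [Finset.mul_sum]
    refine Finset.sum_le_sum fun i _ => ?_
    rw [Finset.mul_sum]
    refine Finset.sum_le_sum fun j _ => ?_
    have h1 : lmin^2 ≤ lam i * lam j := by
      rw [sq]
      exact mul_le_mul (hlb i) (hlb j) hminpos.le ((hminpos.trans_le (hlb i)).le)
    exact mul_le_mul_of_nonneg_right h1 (sq_nonneg _)
  have hsumub : (∑ i, ∑ j, lam i * lam j * (E i j)^2) ≤ lmax^2 * ∑ i, ∑ j, (E i j)^2 := by
    rw [Finset.mul_sum]
    refine Finset.sum_le_sum fun i _ => ?_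
    rw [Finset.mul_sum]
    refine Finset.sum_le_sum fun j _ => ?_
    have h1 : lam i * lam j ≤ lmax^2 := by
      rw [sq]
      exact mul_le_mul (hub i) (hub j) (hminpos.trans_le (hlb j)).le
        ((hminpos.trans_le (hlb i)).trans_le (hub i)).le
    exact mul_le_mul_of_nonneg_right h1 (sq_nonneg _)
  -- put it together
  have hfX : frobNorm X = Real.sqrt (∑ i, ∑ j, lam i * lam j * (E i j)^2) := by
    rw [frobNorm, frobSq_eq_trace, htraceX, htr1]
  have hfD : frobNorm D = Real.sqrt (∑ i, ∑ j, (E i j)^2) := by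
    rw [frobNorm, frobSq_eq_trace, htr2]
  have hmaxpos : (0:ℝ) ≤ lmax := (hminpos.trans_le (hmin.2 hmax.1)).le
  constructor
  · rw [hfX, hfD]
    calc lmin * Real.sqrt (∑ i, ∑ j, (E i j)^2)
        = Real.sqrt (lmin^2 * ∑ i, ∑ j, (E i j)^2) := by
          rw [Real.sqrt_mul (sq_nonneg _), Real.sqrt_sq hminpos.le]
      _ ≤ Real.sqrt (∑ i, ∑ j, lam i * lam j * (E i j)^2) := Real.sqrt_le_sqrt hsumlb
  · rw [hfX, hfD]
    calc Real.sqrt (∑ i, ∑ j, lam i * lam j * (E i j)^2)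
        ≤ Real.sqrt (lmax^2 * ∑ i, ∑ j, (E i j)^2) := Real.sqrt_le_sqrt hsumub
      _ = lmax * Real.sqrt (∑ i, ∑ j, (E i j)^2) := by
          rw [Real.sqrt_mul (sq_nonneg _), Real.sqrt_sq hmaxpos]

end
end

section
/- There exists a universal constant C > 0 (independent of N, Θ, and M) such that the following holds: for every N×N symmetric positive-definite real matrix Θ with largest eigenvalue λ_max, setting A := Θ⁻¹, and every N×N real matrix M with M Mᵀ positive definite, if λ_max · ‖A − M Mᵀ‖_F ≤ C, then 𝒟(Θ, (M Mᵀ)⁻¹) ≤ λ_max · ‖A − M Mᵀ‖_F. -/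
open Matrix
open scoped MatrixOrder

noncomputable section

namespace GaussKLAux

variable {N : ℕ}

lemma trace_nonneg' {P : Matrix (Fin N) (Fin N) ℝ} (hP : P.PosSemidef) : 0 ≤ P.trace := by
  rw [Matrix.trace]
  apply Finset.sum_nonneg
  intro i _
  exact hP.diag_nonneg

lemma trace_mul_nonneg' {P Q : Matrix (Fin N) (Fin N) ℝ} (hP : P.PosSemidef)
    (hQ : Q.PosSemidef) : 0 ≤ (P * Q).trace := by
  set S := CFC.sqrt Q with hSdef
  have hSS : S * S = Q := CFC.sqrt_mul_sqrt_self Q (Matrix.nonneg_iff_posSemidef.mpr hQ)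
  have hSH : Sᴴ = S := (Matrix.nonneg_iff_posSemidef.mp (CFC.sqrt_nonneg Q)).isHermitian
  have h1 : P * Q = P * S * S := by rw [mul_assoc, hSS]
  have h2 : (P * S * S).trace = (S * P * S).trace := by
    rw [trace_mul_cycle]
  have h3 : (S * P * S).PosSemidef := by
    have := hP.conjTranspose_mul_mul_same S
    rwa [hSH] at this
  rw [h1, h2]
  exact trace_nonneg' h3

lemma trace_mul_le' {P Θ : Matrix (Fin N) (Fin N) ℝ} (hP : P.PosSemidef) {c : ℝ}
    (h1 : (c • 1 - Θ).PosSemidef) : (P * Θ).trace ≤ c * P.trace := by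
  have h := trace_mul_nonneg' hP h1
  rw [Matrix.mul_sub, trace_sub, Matrix.mul_smul, mul_one, trace_smul, smul_eq_mul] at h
  linarith

lemma smul_one_sub_posSemidef {T : Matrix (Fin N) (Fin N) ℝ} (hT : T.PosDef) {c : ℝ}
    (hc : ∀ i, hT.isHermitian.eigenvalues i ≤ c) : (c • 1 - T).PosSemidef := by
  set V : Matrix (Fin N) (Fin N) ℝ := (hT.isHermitian.eigenvectorUnitary : Matrix (Fin N) (Fin N) ℝ) with hV
  have hVW : V * star V = 1 := Unitary.coe_mul_star_self _
  have key : c • (1 : Matrix (Fin N) (Fin N) ℝ) - T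
      = V * (c • 1 - diagonal (RCLike.ofReal ∘ hT.isHermitian.eigenvalues)) * star V := by
    rw [Matrix.mul_sub, Matrix.sub_mul]
    congr 1
    · rw [Matrix.mul_smul, mul_one, Matrix.smul_mul, hVW]
    · exact hT.isHermitian.spectral_theorem
  rw [key]
  have hd : (c • 1 - diagonal (RCLike.ofReal ∘ hT.isHermitian.eigenvalues)
      : Matrix (Fin N) (Fin N) ℝ)
      = diagonal (fun i => c - hT.isHermitian.eigenvalues i) := by
    rw [smul_one_eq_diagonal, diagonal_sub]
    rfl
  rw [hd]
  have hdps : (diagonal (fun i => c - hT.isHermitian.eigenvalues i)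
      : Matrix (Fin N) (Fin N) ℝ).PosSemidef :=
    posSemidef_diagonal_iff.mpr fun i => by linarith [hc i]
  have := hdps.mul_mul_conjTranspose_same V
  rwa [Matrix.star_eq_conjTranspose] 

lemma trace_eq_sum_eigen {T : Matrix (Fin N) (Fin N) ℝ} (hT : T.IsHermitian) :
    T.trace = ∑ i, hT.eigenvalues i := by
  set V : Matrix (Fin N) (Fin N) ℝ := (hT.eigenvectorUnitary : Matrix (Fin N) (Fin N) ℝ) with hV
  have hWV : star V * V = 1 := Unitary.coe_star_mul_self _
  conv_lhs => rw [hT.spectral_theorem, Unitary.conjStarAlgAut_apply]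
  rw [trace_mul_cycle, hWV, one_mul, trace_diagonal]
  simp [Function.comp, RCLike.ofReal_real_eq_id]

lemma trace_sq_eq_sum_eigen {T : Matrix (Fin N) (Fin N) ℝ} (hT : T.IsHermitian) :
    (T * T).trace = ∑ i, hT.eigenvalues i ^ 2 := by
  set V : Matrix (Fin N) (Fin N) ℝ := (hT.eigenvectorUnitary : Matrix (Fin N) (Fin N) ℝ) with hV
  set D : Matrix (Fin N) (Fin N) ℝ := diagonal (RCLike.ofReal ∘ hT.eigenvalues) with hD
  have hWV : star V * V = 1 := Unitary.coe_star_mul_self _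
  have key : T * T = V * (D * D) * star V := by
    conv_lhs => rw [hT.spectral_theorem, Unitary.conjStarAlgAut_apply]
    calc (V * D * star V) * (V * D * star V)
        = V * D * (star V * V) * (D * star V) := by simp only [mul_assoc]
      _ = V * (D * D) * star V := by rw [hWV, mul_one]; simp only [mul_assoc]
  rw [key, trace_mul_cycle, hWV, one_mul, hD, diagonal_mul_diagonal, trace_diagonal]
  simp [Function.comp, RCLike.ofReal_real_eq_id, sq]

lemma det_eq_prod_eigen {T : Matrix (Fin N) (Fin N) ℝ} (hT : T.IsHermitian) :
    T.det = ∏ i, hT.eigenvalues i := by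
  simpa using hT.det_eq_prod_eigenvalues

lemma key_scalar {μ : ℝ} (h : 1/2 ≤ μ) : μ - 1 - Real.log μ ≤ 2 * (μ - 1) ^ 2 := by
  have h0 : (0:ℝ) < μ := by linarith
  have h1 : Real.log μ⁻¹ ≤ μ⁻¹ - 1 := Real.log_le_sub_one_of_pos (by positivity)
  rw [Real.log_inv] at h1
  have hinv : μ * μ⁻¹ = 1 := mul_inv_cancel₀ h0.ne'
  nlinarith [sq_nonneg (μ - 1), mul_pos h0 (inv_pos.mpr h0)]

end GaussKLAux

open GaussKLAux

set_option maxHeartbeats 1000000 in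
/-- There is a universal constant `C > 0` (independent of `N`, `Θ`, `M`)
such that: for every symmetric positive-definite `Θ` with largest eigenvalue `λ_max`,
`A = Θ⁻¹`, and every `M` with `M Mᵀ` positive definite, if
`λ_max ‖A − M Mᵀ‖_F ≤ C` then `𝒟(Θ, (M Mᵀ)⁻¹) ≤ λ_max ‖A − M Mᵀ‖_F`. -/
theorem gaussKL_le_of_frobNorm_small :
    ∃ C : ℝ, 0 < C ∧
      ∀ (N : ℕ) (Θ : Matrix (Fin N) (Fin N) ℝ) (hΘ : Θ.PosDef) (lmax : ℝ),
        IsGreatest (Set.range hΘ.isHermitian.eigenvalues) lmax →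
        ∀ M : Matrix (Fin N) (Fin N) ℝ, (M * Mᵀ).PosDef →
          lmax * frobNorm (Θ⁻¹ - M * Mᵀ) ≤ C →
          gaussKL Θ ((M * Mᵀ)⁻¹) ≤ lmax * frobNorm (Θ⁻¹ - M * Mᵀ) := by
  refine ⟨1/2, by norm_num, ?_⟩
  intro N Θ hΘ lmax hlmax M hB hδC
  classical
  set B := M * Mᵀ with hBdef
  set E := Θ⁻¹ - B with hEdef
  set δ := lmax * frobNorm E with hδdef
  obtain ⟨i₀, hi₀⟩ := hlmax.1
  have hlmax_pos : 0 < lmax := hi₀ ▸ hΘ.eigenvalues_pos i₀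
  have hub : ∀ i, hΘ.isHermitian.eigenvalues i ≤ lmax := fun i => hlmax.2 ⟨i, rfl⟩
  have hfrob_nonneg : 0 ≤ frobNorm E := Real.sqrt_nonneg _
  have hδ0 : 0 ≤ δ := mul_nonneg hlmax_pos.le hfrob_nonneg
  have hδhalf : δ ≤ 1/2 := hδC
  have hdetΘ : 0 < Θ.det := hΘ.det_pos
  have hdetB : 0 < B.det := hB.det_pos
  set R := CFC.sqrt Θ with hRdef
  have hRR : R * R = Θ := CFC.sqrt_mul_sqrt_self Θ (Matrix.nonneg_iff_posSemidef.mpr hΘ.posSemidef)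
  have hRH : Rᴴ = R := (Matrix.nonneg_iff_posSemidef.mp (CFC.sqrt_nonneg Θ)).isHermitian
  have hdetR : R.det ≠ 0 := by
    intro h
    have h2 : Θ.det = 0 := by rw [← hRR, det_mul, h, mul_zero]
    exact hdetΘ.ne' h2
  have hRu : IsUnit R.det := isUnit_iff_ne_zero.mpr hdetR
  have hRinv1 : R * Θ⁻¹ * R = 1 := by
    rw [← hRR, Matrix.mul_inv_rev]
    calc R * (R⁻¹ * R⁻¹) * R = (R * R⁻¹) * (R⁻¹ * R) := by simp only [mul_assoc]
      _ = 1 := by rw [Matrix.mul_nonsing_inv _ hRu, Matrix.nonsing_inv_mul _ hRu, one_mul]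
  set T := R * B * R with hTdef
  have hTps : T.PosSemidef := by
    have h := hB.posSemidef.conjTranspose_mul_mul_same R
    rwa [hRH] at h
  have hTh := hTps.isHermitian
  set μ := hTh.eigenvalues with hμdef
  have hEh : E.IsHermitian := (hΘ.isHermitian.inv).sub hB.isHermitian
  have hone : 1 - T = R * E * R := by
    rw [hEdef, Matrix.mul_sub, Matrix.sub_mul, hRinv1]
  have htraceT : T.trace = (B * Θ).trace := by
    rw [hTdef, trace_mul_cycle, hRR, trace_mul_comm]
  have hdetT : T.det = Θ.det * B.det := by
    have hΘd : Θ.det = R.det * R.det := by rw [← hRR, det_mul]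
    rw [hTdef, det_mul, det_mul, hΘd]; ring
  have hBdetu : IsUnit B.det := isUnit_iff_ne_zero.mpr hdetB.ne'
  have hgauss : gaussKL Θ B⁻¹ = (T.trace - Real.log T.det - N) / 2 := by
    rw [gaussKL, Matrix.nonsing_inv_nonsing_inv _ hBdetu, Matrix.det_nonsing_inv,
      Ring.inverse_eq_inv, Real.log_inv, hdetT,
      Real.log_mul hdetΘ.ne' hdetB.ne', ← htraceT]
    ring
  have htrsum : T.trace = ∑ i, μ i := trace_eq_sum_eigen hTh
  have htrsq : (T * T).trace = ∑ i, μ i ^ 2 := trace_sq_eq_sum_eigen hTh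
  have hdetprod : T.det = ∏ i, μ i := det_eq_prod_eigen hTh
  set Q := ∑ i, (μ i - 1)^2 with hQdef
  have hQval : Q = (∑ i, μ i ^ 2) - 2*(∑ i, μ i) + N := by
    rw [hQdef, Finset.sum_congr rfl fun i _ => (by ring : (μ i - 1)^2 = μ i^2 - 2*μ i + 1)]
    rw [Finset.sum_add_distrib, Finset.sum_sub_distrib, Finset.sum_const, Finset.card_univ,
      Fintype.card_fin, ← Finset.mul_sum]
    simp
  have hQtrace : Q = ((1 - T) * (1 - T)).trace := by
    have hexp : (1 - T) * (1 - T) = 1 - T - T + T * T := by noncomm_ring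
    rw [hexp, trace_add, trace_sub, trace_sub, trace_one, htrsq, htrsum, hQval,
      Fintype.card_fin]
    ring
  have hprod : (1 - T) * (1 - T) = R * (E * Θ * E) * R := by
    rw [hone]
    calc (R * E * R) * (R * E * R) = R * E * (R * R) * (E * R) := by simp only [mul_assoc]
      _ = R * (E * Θ * E) * R := by rw [hRR]; simp only [mul_assoc]
  have htr2 : ((1 - T) * (1 - T)).trace = ((E * Θ * E) * Θ).trace := by
    rw [hprod, trace_mul_cycle, hRR, trace_mul_comm]
  have hP1 : (E * Θ * E).PosSemidef := by
    have h := hΘ.posSemidef.conjTranspose_mul_mul_same E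
    rwa [hEh] at h
  have hE2 : (E * E).PosSemidef := by
    have h := posSemidef_conjTranspose_mul_self E
    rwa [hEh] at h
  have hcap : (lmax • 1 - Θ).PosSemidef := smul_one_sub_posSemidef hΘ hub
  have hb1 : ((E * Θ * E) * Θ).trace ≤ lmax * (E * Θ * E).trace := trace_mul_le' hP1 hcap
  have htr3 : (E * Θ * E).trace = ((E * E) * Θ).trace := by
    calc (E * Θ * E).trace = (E * (E * Θ)).trace := trace_mul_comm (E * Θ) E
      _ = ((E * E) * Θ).trace := by rw [← mul_assoc]
  have hb2 : ((E * E) * Θ).trace ≤ lmax * (E * E).trace := trace_mul_le' hE2 hcap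
  have hfrobsq : frobNorm E ^ 2 = (E * E).trace := by
    rw [frobNorm, Real.sq_sqrt (by positivity)]
    rw [Matrix.trace]
    simp only [Matrix.diag, Matrix.mul_apply]
    apply Finset.sum_congr rfl
    intro i _
    apply Finset.sum_congr rfl
    intro j _
    have hsym : E j i = E i j := by
      conv_lhs => rw [← hEh]
      simp [Matrix.conjTranspose_apply]
    rw [hsym]; ring
  have hQδ : Q ≤ δ^2 := by
    have h5 : Q ≤ lmax * (lmax * (E * E).trace) := by
      calc Q = ((E * Θ * E) * Θ).trace := by rw [hQtrace, htr2]
        _ ≤ lmax * (E * Θ * E).trace := hb1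
        _ = lmax * ((E * E) * Θ).trace := by rw [htr3]
        _ ≤ lmax * (lmax * (E * E).trace) :=
            mul_le_mul_of_nonneg_left hb2 hlmax_pos.le
    have h6 : δ^2 = lmax * (lmax * (E * E).trace) := by
      rw [hδdef, mul_pow, hfrobsq]; ring
    linarith
  have hμlb : ∀ i, 1/2 ≤ μ i := by
    intro i
    have h1 : (μ i - 1)^2 ≤ Q := by
      rw [hQdef]
      exact Finset.single_le_sum (f := fun j => (μ j - 1)^2)
        (fun j _ => sq_nonneg _) (Finset.mem_univ i)
    have h2 : (μ i - 1)^2 ≤ δ^2 := h1.trans hQδ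
    nlinarith
  have hμpos : ∀ i, (0:ℝ) < μ i := fun i => lt_of_lt_of_le (by norm_num) (hμlb i)
  have hlogdet : Real.log T.det = ∑ i, Real.log (μ i) := by
    rw [hdetprod, Real.log_prod (fun i _ => (hμpos i).ne')]
  rw [hgauss]
  have hsum : T.trace - Real.log T.det - N = ∑ i, (μ i - 1 - Real.log (μ i)) := by
    have h7 : ∑ i, (μ i - 1 - Real.log (μ i))
        = (∑ i, μ i) - N - ∑ i, Real.log (μ i) := by
      rw [Finset.sum_sub_distrib, Finset.sum_sub_distrib, Finset.sum_const,
        Finset.card_univ, Fintype.card_fin, nsmul_eq_mul, mul_one]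
    rw [h7, htrsum, hlogdet]
    ring
  have hterm : ∑ i, (μ i - 1 - Real.log (μ i)) ≤ ∑ i, 2*(μ i - 1)^2 :=
    Finset.sum_le_sum (fun i _ => key_scalar (hμlb i))
  have hterm2 : ∑ i, 2*(μ i - 1)^2 = 2 * Q := by
    rw [hQdef, Finset.mul_sum]
  have hfinal : δ^2 ≤ δ := by nlinarith
  rw [hsum]
  calc (∑ i, (μ i - 1 - Real.log (μ i))) / 2 ≤ (2 * Q) / 2 := by
        rw [← hterm2]; linarith
    _ = Q := by ring
    _ ≤ δ^2 := hQδ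
    _ ≤ δ := hfinal


end
end

section
/- Let Θ be an n×n symmetric positive-definite real matrix and U an n×n upper-triangular matrix with positive diagonal entries such that Θ = U Uᵀ. Fix k ∈ {1, …, n} and let s := {k, k+1, …, n}. Then Θ_{s,s}⁻¹ e₁ / √( e₁ᵀ Θ_{s,s}⁻¹ e₁ ) = (U⁻ᵀ e_k)_s, where e₁ is the first standard basis vector of ℝ^{s} (corresponding to index k), e_k is the k-th standard basis vector of ℝ^n, and (U⁻ᵀ e_k)_s is the restriction of the vector U⁻ᵀ e_k to the indices in s. In particular, the sparsity-constrained KL-optimal column with column sparsity set s equals the k-th column of U⁻ᵀ restricted to s. -/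
open Matrix

noncomputable section

/-- The trailing principal submatrix `X_{s,s}` of `X` for `s = {k, …, n}`. -/
def trailSub {n : ℕ} (X : Matrix (Fin n) (Fin n) ℝ) (k : Fin n) :
    Matrix {i : Fin n // k ≤ i} {i : Fin n // k ≤ i} ℝ :=
  X.submatrix Subtype.val Subtype.val

/-- The restriction `v_s` of a vector `v` to the indices `s = {k, …, n}`. -/
def trailVec {n : ℕ} (v : Fin n → ℝ) (k : Fin n) : {i : Fin n // k ≤ i} → ℝ :=
  fun i => v i.val

/-- The standard basis vector `e₁` of `ℝ^s`, `s = {k, …, n}`, corresponding to index `k`. -/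
def trailE1 {n : ℕ} (k : Fin n) : {i : Fin n // k ≤ i} → ℝ :=
  Pi.single ⟨k, le_refl k⟩ 1

lemma sum_subtype_eq_aux {n : ℕ} (k : Fin n) (f : Fin n → ℝ)
    (hf : ∀ j : Fin n, ¬ k ≤ j → f j = 0) :
    ∑ j : {i : Fin n // k ≤ i}, f j.val = ∑ j : Fin n, f j := by
  rw [← Finset.sum_filter_of_ne (s := Finset.univ) (p := fun j => k ≤ j)
    (f := f) (by intro x _ hx; by_contra h; exact hx (hf x h))]
  exact (Finset.sum_subtype _ (by simp) f).symm

/-- If `Θ = U Uᵀ` with `U` upper triangular with positive diagonal, and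
`s = {k, …, n}`, then `Θ_{s,s}⁻¹ e₁ / √(e₁ᵀ Θ_{s,s}⁻¹ e₁) = (U⁻ᵀ e_k)_s`: the
sparsity-constrained KL-optimal column with column sparsity set `s` equals the `k`-th
column of `U⁻ᵀ` restricted to `s`. -/
theorem klOptimal_column_eq_inv_transpose_column
    {n : ℕ} (Θ U : Matrix (Fin n) (Fin n) ℝ) (hΘ : Θ.PosDef)
    (hUt : ∀ i j : Fin n, j < i → U i j = 0)
    (hUd : ∀ i : Fin n, 0 < U i i)
    (hfact : Θ = U * Uᵀ) (k : Fin n) :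
    (fun i : {i : Fin n // k ≤ i} =>
        ((trailSub Θ k)⁻¹ *ᵥ trailE1 k) i /
          Real.sqrt (trailE1 k ⬝ᵥ ((trailSub Θ k)⁻¹ *ᵥ trailE1 k))) =
      trailVec ((Uᵀ)⁻¹ *ᵥ Pi.single k 1) k := by
  have hbt : U.BlockTriangular id := fun i j h => hUt i j h
  have hdetU : U.det = ∏ i, U i i := det_of_upperTriangular hbt
  have hdetU_pos : 0 < U.det := hdetU ▸ Finset.prod_pos (fun i _ => hUd i)
  have hUunit : IsUnit U.det := isUnit_iff_ne_zero.mpr (ne_of_gt hdetU_pos)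
  haveI : Invertible U := U.invertibleOfIsUnitDet hUunit
  have hU' : U⁻¹.BlockTriangular id := blockTriangular_inv_of_blockTriangular hbt
  -- the candidate vector
  set w : {i : Fin n // k ≤ i} → ℝ := fun i => U⁻¹ k i.val with hw_def
  have hw : trailVec ((Uᵀ)⁻¹ *ᵥ Pi.single k 1) k = w := by
    funext i
    simp only [trailVec, mulVec_single, hw_def, mul_one]
    rw [MulOpposite.op_one, one_smul, col_apply, ← transpose_nonsing_inv, transpose_apply]
  -- diagonal entry of the inverse
  have hUkk : U⁻¹ k k * U k k = 1 := by
    have h1 : (U⁻¹ * U) k k = 1 := by rw [nonsing_inv_mul U hUunit, one_apply_eq]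
    rw [mul_apply] at h1
    rwa [Finset.sum_eq_single k (fun j _ hj => ?_) (by simp)] at h1
    rcases lt_or_gt_of_ne hj with h | h
    · rw [hU' (show (id j : Fin n) < id k from h), zero_mul]
    · rw [hUt j k h, mul_zero]
  -- trailSub Θ k = Us * Usᵀ for invertibility
  set T := trailSub Θ k with hT_def
  have hTfact : T = trailSub U k * (trailSub U k)ᵀ := by
    ext i j
    obtain ⟨i, hi⟩ := i
    obtain ⟨j, hj⟩ := j
    have h0 : ∀ m : Fin n, ¬ k ≤ m → U i m * U j m = 0 := by
      intro m hm
      rw [hUt i m (lt_of_lt_of_le (not_le.mp hm) hi), zero_mul]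
    have hsum := sum_subtype_eq_aux k (fun m => U i m * U j m) h0
    simp only [hT_def, trailSub, mul_apply, submatrix_apply, transpose_apply, hfact]
    exact hsum.symm
  have hbtUs : (trailSub U k).BlockTriangular id :=
    fun i j h => hUt i.val j.val (Subtype.coe_lt_coe.mpr h)
  have hdetUs : (trailSub U k).det = ∏ i : {i : Fin n // k ≤ i}, U i.val i.val := det_of_upperTriangular hbtUs
  have hdetUs_pos : 0 < (trailSub U k).det :=
    hdetUs ▸ Finset.prod_pos (fun i _ => hUd i.val)
  have hTdet : IsUnit T.det := by
    rw [hTfact, det_mul, det_transpose]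
    exact isUnit_iff_ne_zero.mpr (ne_of_gt (mul_pos hdetUs_pos hdetUs_pos))
  -- the key computation: T *ᵥ w = U k k • e₁
  have hTw : T *ᵥ w = U k k • trailE1 k := by
    funext i
    have h0 : ∀ m : Fin n, ¬ k ≤ m → Θ i.val m * U⁻¹ k m = 0 := by
      intro m hm
      rw [hU' (show (id m : Fin n) < id k from not_le.mp hm), mul_zero]
    have heq := sum_subtype_eq_aux k (fun m => Θ i.val m * U⁻¹ k m) h0
    show ∑ m : {i : Fin n // k ≤ i}, T i m * w m = _
    simp only [hT_def, trailSub, submatrix_apply, hw_def]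
    rw [heq]
    have hcol : ∑ m : Fin n, Θ i.val m * U⁻¹ k m = (Θ * (U⁻¹)ᵀ) i.val k := by
      rw [mul_apply]; simp [transpose_apply]
    rw [hcol, hfact]
    have : U * Uᵀ * (U⁻¹)ᵀ = U := by
      rw [mul_assoc, ← transpose_mul, nonsing_inv_mul U hUunit, transpose_one, mul_one]
    rw [this]
    by_cases hik : i = ⟨k, le_refl k⟩
    · subst hik; simp [trailE1]
    · have hki : (k : Fin n) < i.val := lt_of_le_of_ne i.2 (by
        intro h; exact hik (Subtype.ext h.symm))
      rw [hUt i.val k hki]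
      simp [trailE1, Pi.single_apply, hik]
  -- invert
  have hinv : T⁻¹ *ᵥ (T *ᵥ w) = w := by
    rw [mulVec_mulVec, nonsing_inv_mul T hTdet, one_mulVec]
  rw [hTw] at hinv
  have hsmul : T⁻¹ *ᵥ (U k k • trailE1 k) = U k k • (T⁻¹ *ᵥ trailE1 k) := by
    rw [mulVec_smul]
  rw [hsmul] at hinv
  have hUkk_ne : U k k ≠ 0 := ne_of_gt (hUd k)
  have hTe : T⁻¹ *ᵥ trailE1 k = (U k k)⁻¹ • w := by
    rw [← hinv, smul_smul, inv_mul_cancel₀ hUkk_ne, one_smul]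
  have hwk : w ⟨k, le_refl k⟩ = (U k k)⁻¹ := by
    rw [hw_def]
    exact eq_inv_of_mul_eq_one_left hUkk
  have hdot : trailE1 k ⬝ᵥ (T⁻¹ *ᵥ trailE1 k) = (U k k)⁻¹ * (U k k)⁻¹ := by
    rw [hTe, trailE1, single_dotProduct, one_mul, Pi.smul_apply, smul_eq_mul, hwk]
  have hsqrt : Real.sqrt (trailE1 k ⬝ᵥ (T⁻¹ *ᵥ trailE1 k)) = (U k k)⁻¹ := by
    rw [hdot, Real.sqrt_mul_self (le_of_lt (inv_pos.mpr (hUd k)))]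
  funext i
  rw [hw, hsqrt, hTe, Pi.smul_apply, smul_eq_mul]
  exact mul_div_cancel_left₀ _ (inv_ne_zero hUkk_ne)


end
end

section
/- Let M = [[A, C],[Cᵀ, D]] be a symmetric positive-definite real matrix with blocks A ∈ ℝ^{m×m}, C ∈ ℝ^{m×p}, D ∈ ℝ^{p×p}. Suppose A = U Uᵀ with U ∈ ℝ^{m×m} upper triangular with positive diagonal entries, and set B := U⁻¹ C. Then D − Bᵀ B is positive definite, and the first column of M⁻¹ is given blockwise by M⁻¹ (e₁; 0) = (1/U₁₁) · ( U⁻ᵀ w ; −D⁻¹ Bᵀ w ), where w := e₁ + B (D − Bᵀ B)⁻¹ Bᵀ e₁, e₁ ∈ ℝ^m is the first standard basis vector, and (x; y) denotes the concatenation of x ∈ ℝ^m and y ∈ ℝ^p. -/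
open Matrix

noncomputable section

/-- Let `M = [[A, C],[Cᵀ, D]]` be symmetric positive definite,
`A = U Uᵀ` with `U` upper triangular with positive diagonal, and `B = U⁻¹ C`. Then the
Schur complement `D − Bᵀ B` is positive definite, and the first column of `M⁻¹` satisfies
`M⁻¹ (e₁; 0) = (1/U₁₁) (U⁻ᵀ w ; −D⁻¹ Bᵀ w)` with `w = e₁ + B (D − BᵀB)⁻¹ Bᵀ e₁`. -/
theorem first_column_of_block_inverse
    {m p : ℕ} [NeZero m]
    (A : Matrix (Fin m) (Fin m) ℝ) (C : Matrix (Fin m) (Fin p) ℝ)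
    (D : Matrix (Fin p) (Fin p) ℝ)
    (hM : (Matrix.fromBlocks A C Cᵀ D).PosDef)
    (U : Matrix (Fin m) (Fin m) ℝ)
    (hUt : ∀ i j : Fin m, j < i → U i j = 0)
    (hUd : ∀ i : Fin m, 0 < U i i)
    (hA : A = U * Uᵀ) :
    let B : Matrix (Fin m) (Fin p) ℝ := U⁻¹ * C
    let w : Fin m → ℝ :=
      Pi.single (0 : Fin m) 1 +
        B *ᵥ ((D - Bᵀ * B)⁻¹ *ᵥ (Bᵀ *ᵥ Pi.single (0 : Fin m) 1))
    (D - Bᵀ * B).PosDef ∧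
    (Matrix.fromBlocks A C Cᵀ D)⁻¹ *ᵥ
        Sum.elim (Pi.single (0 : Fin m) 1) (0 : Fin p → ℝ) =
      (U 0 0)⁻¹ • Sum.elim ((Uᵀ)⁻¹ *ᵥ w) (-(D⁻¹ *ᵥ (Bᵀ *ᵥ w))) := by
  intro B w
  set e : Fin m → ℝ := Pi.single (0 : Fin m) 1 with he
  -- invertibility of U
  have hUdet : IsUnit U.det := by
    have : U.det = ∏ i, U i i := Matrix.det_of_upperTriangular (fun i j h => hUt i j h)
    have hpos : 0 < U.det := this ▸ Finset.prod_pos (fun i _ => hUd i)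
    exact isUnit_iff_ne_zero.2 hpos.ne'
  have hUTdet : IsUnit Uᵀ.det := by rwa [Matrix.det_transpose]
  have hAdet : IsUnit A.det := by
    rw [hA, Matrix.det_mul]; exact hUdet.mul hUTdet
  haveI : Invertible A := A.invertibleOfIsUnitDet hAdet
  have hCT : Cᴴ = Cᵀ := Matrix.conjTranspose_eq_transpose_of_trivial C
  have hAherm : A.IsHermitian := by
    rw [hA, Matrix.IsHermitian]
    rw [Matrix.conjTranspose_eq_transpose_of_trivial, Matrix.transpose_mul,
      Matrix.transpose_transpose]
  -- B facts
  have hBT : Bᵀ = Cᵀ * (Uᵀ)⁻¹ := by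
    show (U⁻¹ * C)ᵀ = _
    rw [Matrix.transpose_mul, Matrix.transpose_nonsing_inv]
  have hSS' : D - Bᵀ * B = D - Cᴴ * A⁻¹ * C := by
    rw [hCT, hBT, hA, Matrix.mul_inv_rev]
    show D - Cᵀ * (Uᵀ)⁻¹ * (U⁻¹ * C) = _
    simp only [Matrix.mul_assoc]
  -- Schur complement positive definite
  have hMherm := hM.1
  have hSherm : (D - Cᴴ * A⁻¹ * C).IsHermitian := by
    rw [← Matrix.IsHermitian.fromBlocks₁₁ C D hAherm, hCT]
    exact hMherm
  have hS : (D - Bᵀ * B).PosDef := by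
    rw [hSS']
    refine Matrix.PosDef.of_dotProduct_mulVec_pos hSherm (fun y hy => ?_)
    have hv : Sum.elim (-((A⁻¹ * C) *ᵥ y)) y ≠ 0 := by
      intro h
      exact hy (funext fun j => congrFun h (Sum.inr j))
    have := hM.dotProduct_mulVec_pos hv
    rwa [Matrix.dotProduct_mulVec, ← hCT,
      Matrix.schur_complement_eq₁₁ C D _ _ hAherm, star_trivial,
      neg_add_cancel, Matrix.zero_vecMul, zero_dotProduct, zero_add,
      ← Matrix.dotProduct_mulVec] at this
  refine ⟨hS, ?_⟩
  -- D is positive definite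
  have hD : D.PosDef := by
    have hBB : (Bᵀ * B).PosSemidef := by
      have := Matrix.posSemidef_conjTranspose_mul_self B
      rwa [Matrix.conjTranspose_eq_transpose_of_trivial] at this
    have := hS.add_posSemidef hBB
    rwa [sub_add_cancel] at this
  have hDdet : IsUnit D.det := isUnit_iff_ne_zero.2 hD.det_pos.ne'
  have hSdet : IsUnit (D - Bᵀ * B).det := isUnit_iff_ne_zero.2 hS.det_pos.ne'
  have hMdet : IsUnit (Matrix.fromBlocks A C Cᵀ D).det :=
    isUnit_iff_ne_zero.2 hM.det_pos.ne'
  -- the key vectors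
  set z : Fin p → ℝ := (D - Bᵀ * B)⁻¹ *ᵥ (Bᵀ *ᵥ e) with hz
  have hwz : w = e + B *ᵥ z := rfl
  have hSz : (D - Bᵀ * B) *ᵥ z = Bᵀ *ᵥ e := by
    rw [hz, Matrix.mulVec_mulVec, Matrix.mul_nonsing_inv _ hSdet, Matrix.one_mulVec]
  have hBw : Bᵀ *ᵥ w = D *ᵥ z := by
    rw [hwz, Matrix.mulVec_add, Matrix.mulVec_mulVec, ← hSz, ← Matrix.add_mulVec,
      sub_add_cancel]
  have hDz : D⁻¹ *ᵥ (Bᵀ *ᵥ w) = z := by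
    rw [hBw, Matrix.mulVec_mulVec, Matrix.nonsing_inv_mul _ hDdet, Matrix.one_mulVec]
  have hC : U * B = C := by
    show U * (U⁻¹ * C) = C
    rw [← Matrix.mul_assoc, Matrix.mul_nonsing_inv _ hUdet, Matrix.one_mul]
  -- top block
  have htop : A *ᵥ ((Uᵀ)⁻¹ *ᵥ w) + C *ᵥ (-(D⁻¹ *ᵥ (Bᵀ *ᵥ w))) = U 0 0 • e := by
    have h1 : A *ᵥ ((Uᵀ)⁻¹ *ᵥ w) = U *ᵥ w := by
      rw [hA, Matrix.mulVec_mulVec, Matrix.mul_assoc,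
        Matrix.mul_nonsing_inv _ hUTdet, Matrix.mul_one]
    have h2 : C *ᵥ (-(D⁻¹ *ᵥ (Bᵀ *ᵥ w))) = -(U *ᵥ (B *ᵥ z)) := by
      rw [hDz, Matrix.mulVec_neg, ← hC, ← Matrix.mulVec_mulVec]
    rw [h1, h2, hwz, Matrix.mulVec_add, add_neg_cancel_right, he, Matrix.mulVec_single_one]
    ext i
    rcases eq_or_ne i 0 with hi | hi
    · subst hi; simp
    · have : (0 : Fin m) < i := (Fin.pos_iff_ne_zero' i).2 hi
      simp [Matrix.transpose_apply, hUt i 0 this, Pi.single_eq_of_ne hi]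
  -- bottom block
  have hbot : Cᵀ *ᵥ ((Uᵀ)⁻¹ *ᵥ w) + D *ᵥ (-(D⁻¹ *ᵥ (Bᵀ *ᵥ w))) = 0 := by
    rw [Matrix.mulVec_mulVec, ← hBT, hDz, Matrix.mulVec_neg, ← hBw, add_neg_cancel]
  -- conclude
  have key : (Matrix.fromBlocks A C Cᵀ D) *ᵥ
      ((U 0 0)⁻¹ • Sum.elim ((Uᵀ)⁻¹ *ᵥ w) (-(D⁻¹ *ᵥ (Bᵀ *ᵥ w)))) =
      Sum.elim e 0 := by
    rw [Matrix.mulVec_smul, Matrix.fromBlocks_mulVec]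
    simp only [Sum.elim_comp_inl, Sum.elim_comp_inr]
    rw [htop, hbot]
    funext i
    rcases i with i | j
    · simp only [Pi.smul_apply, Sum.elim_inl, smul_eq_mul]
      rw [← mul_assoc, inv_mul_cancel₀ (hUd 0).ne', one_mul]
    · simp
  calc (Matrix.fromBlocks A C Cᵀ D)⁻¹ *ᵥ Sum.elim e (0 : Fin p → ℝ)
      = (Matrix.fromBlocks A C Cᵀ D)⁻¹ *ᵥ ((Matrix.fromBlocks A C Cᵀ D) *ᵥ
        ((U 0 0)⁻¹ • Sum.elim ((Uᵀ)⁻¹ *ᵥ w) (-(D⁻¹ *ᵥ (Bᵀ *ᵥ w))))) := by rw [key]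
    _ = _ := by
        rw [Matrix.mulVec_mulVec, Matrix.nonsing_inv_mul _ hMdet, Matrix.one_mulVec]

end
end

section
/- Let M = [[A, C],[Cᵀ, D]] be a symmetric positive-definite real matrix with blocks A ∈ ℝ^{m×m}, C ∈ ℝ^{m×p}, D ∈ ℝ^{p×p}. Suppose A = U Uᵀ with U ∈ ℝ^{m×m} upper triangular with positive diagonal entries, and set B := U⁻¹ C. Then the leading entry of the inverse satisfies (e₁; 0)ᵀ M⁻¹ (e₁; 0) = ( 1 + e₁ᵀ B (D − Bᵀ B)⁻¹ Bᵀ e₁ ) / U₁₁², where e₁ ∈ ℝ^m is the first standard basis vector; in particular, √( (e₁;0)ᵀ M⁻¹ (e₁;0) ) = c / U₁₁ with c := √( 1 + e₁ᵀ B (D − Bᵀ B)⁻¹ Bᵀ e₁ ). -/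
open Matrix

noncomputable section

private lemma posDef_of_posSemidef_isUnit' {n : Type*} [Fintype n] [DecidableEq n]
    {S : Matrix n n ℝ} (h : S.PosSemidef) (hu : IsUnit S) : S.PosDef := by
  refine posDef_iff_dotProduct_mulVec.mpr
    ⟨h.1, fun x hx => lt_of_le_of_ne (h.dotProduct_mulVec_nonneg x) fun he => hx ?_⟩
  have h0 : S *ᵥ x = 0 := (h.dotProduct_mulVec_zero_iff x).mp he.symm
  exact Matrix.mulVec_injective_iff_isUnit.mpr hu (a₁ := x) (a₂ := 0) (by simpa using h0)

/-- Let `M = [[A, C],[Cᵀ, D]]` be symmetric positive definite,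
`A = U Uᵀ` with `U` upper triangular with positive diagonal, and `B = U⁻¹ C`. Then the
leading entry of the inverse satisfies
`(e₁;0)ᵀ M⁻¹ (e₁;0) = (1 + e₁ᵀ B (D − BᵀB)⁻¹ Bᵀ e₁) / U₁₁²`; in particular
`√((e₁;0)ᵀ M⁻¹ (e₁;0)) = c / U₁₁` with `c = √(1 + e₁ᵀ B (D − BᵀB)⁻¹ Bᵀ e₁)`. -/
theorem leading_entry_of_block_inverse
    {m p : ℕ} [NeZero m]
    (A : Matrix (Fin m) (Fin m) ℝ) (C : Matrix (Fin m) (Fin p) ℝ)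
    (D : Matrix (Fin p) (Fin p) ℝ)
    (hM : (Matrix.fromBlocks A C Cᵀ D).PosDef)
    (U : Matrix (Fin m) (Fin m) ℝ)
    (hUt : ∀ i j : Fin m, j < i → U i j = 0)
    (hUd : ∀ i : Fin m, 0 < U i i)
    (hA : A = U * Uᵀ) :
    let B : Matrix (Fin m) (Fin p) ℝ := U⁻¹ * C
    let q : ℝ :=
      Pi.single (0 : Fin m) 1 ⬝ᵥ
        (B *ᵥ ((D - Bᵀ * B)⁻¹ *ᵥ (Bᵀ *ᵥ Pi.single (0 : Fin m) 1)))
    (Sum.elim (Pi.single (0 : Fin m) 1) (0 : Fin p → ℝ) ⬝ᵥ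
        ((Matrix.fromBlocks A C Cᵀ D)⁻¹ *ᵥ
          Sum.elim (Pi.single (0 : Fin m) 1) (0 : Fin p → ℝ)) =
      (1 + q) / (U 0 0) ^ 2) ∧
    Real.sqrt (Sum.elim (Pi.single (0 : Fin m) 1) (0 : Fin p → ℝ) ⬝ᵥ
        ((Matrix.fromBlocks A C Cᵀ D)⁻¹ *ᵥ
          Sum.elim (Pi.single (0 : Fin m) 1) (0 : Fin p → ℝ))) =
      Real.sqrt (1 + q) / U 0 0 := by
  intro B q
  set e : Fin m → ℝ := Pi.single (0 : Fin m) 1 with he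
  have hUdet : U.det = ∏ i, U i i :=
    Matrix.det_of_upperTriangular (fun i j h => hUt i j h)
  have hUdpos : (0:ℝ) < U.det := hUdet ▸ Finset.prod_pos (fun i _ => hUd i)
  haveI : Invertible U := U.invertibleOfIsUnitDet hUdpos.ne'.isUnit
  haveI : Invertible Uᵀ := U.transpose.invertibleOfIsUnitDet
    (by rw [det_transpose]; exact hUdpos.ne'.isUnit)
  haveI hAinv : Invertible A := hA ▸ invertibleMul U Uᵀ
  haveI hMi : Invertible (fromBlocks A C Cᵀ D) := hM.isUnit.invertible
  haveI hS0inv : Invertible (D - Cᵀ * ⅟A * C) := invertibleOfFromBlocks₁₁Invertible A C Cᵀ D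
  have hSeq : D - Cᵀ * ⅟A * C = D - Cᵀ * A⁻¹ * C := by rw [invOf_eq_nonsing_inv]
  have hMinv :
      (fromBlocks A C Cᵀ D)⁻¹ =
        fromBlocks (A⁻¹ + A⁻¹ * C * (D - Cᵀ * A⁻¹ * C)⁻¹ * Cᵀ * A⁻¹)
          (-(A⁻¹ * C * (D - Cᵀ * A⁻¹ * C)⁻¹))
          (-((D - Cᵀ * A⁻¹ * C)⁻¹ * Cᵀ * A⁻¹)) ((D - Cᵀ * A⁻¹ * C)⁻¹) := by
    rw [← invOf_eq_nonsing_inv, invOf_fromBlocks₁₁_eq]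
    simp only [invOf_eq_nonsing_inv]
  -- vector facts
  have hU1 : U *ᵥ e = U 0 0 • e := by
    rw [he, mulVec_single]
    funext i
    rcases eq_or_ne i 0 with rfl | hi
    · simp
    · have hpos : (0 : Fin m) < i := by
        rw [Fin.lt_def, Fin.val_zero]
        exact Nat.pos_of_ne_zero fun h => hi (Fin.ext (by simp [h]))
      simp [Pi.single_eq_of_ne hi, hUt i 0 hpos]
  have hUinv1 : U⁻¹ *ᵥ e = (U 0 0)⁻¹ • e := by
    have h := congrArg (U⁻¹ *ᵥ ·) hU1
    simp only [mulVec_mulVec, nonsing_inv_mul U hUdpos.ne'.isUnit, one_mulVec,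
      mulVec_smul] at h
    exact ((inv_smul_eq_iff₀ (hUd 0).ne').mpr h).symm
  have hdotT : ∀ z : Fin m → ℝ, e ⬝ᵥ ((Uᵀ)⁻¹ *ᵥ z) = (U 0 0)⁻¹ * (e ⬝ᵥ z) := by
    intro z
    rw [← transpose_nonsing_inv, dotProduct_mulVec, vecMul_transpose, hUinv1,
      smul_dotProduct, smul_eq_mul]
  -- matrix identities
  have hBdef : B = U⁻¹ * C := rfl
  have hBt : Bᵀ = Cᵀ * (Uᵀ)⁻¹ := by
    rw [hBdef, transpose_mul, transpose_nonsing_inv]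
  have hAinvE : A⁻¹ = (Uᵀ)⁻¹ * U⁻¹ := by rw [hA, Matrix.mul_inv_rev]
  have hCA : Cᵀ * A⁻¹ = Bᵀ * U⁻¹ := by
    simp only [hAinvE, hBt, Matrix.mul_assoc]
  have hAC : A⁻¹ * C = (Uᵀ)⁻¹ * B := by
    simp only [hAinvE, hBdef, Matrix.mul_assoc]
  have hSBB : D - Cᵀ * A⁻¹ * C = D - Bᵀ * B := by
    simp only [hAinvE, hBdef, hBt, Matrix.mul_assoc, transpose_mul, transpose_nonsing_inv]
  have hP2 : A⁻¹ * C * (D - Cᵀ * A⁻¹ * C)⁻¹ * Cᵀ * A⁻¹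
      = (Uᵀ)⁻¹ * (B * ((D - Bᵀ * B)⁻¹ * (Bᵀ * U⁻¹))) := by
    rw [hSBB]
    simp only [hAinvE, hBdef, hBt, Matrix.mul_assoc, transpose_mul, transpose_nonsing_inv]
  -- main computation
  have key : Sum.elim e (0 : Fin p → ℝ) ⬝ᵥ
      ((Matrix.fromBlocks A C Cᵀ D)⁻¹ *ᵥ Sum.elim e (0 : Fin p → ℝ)) =
      (1 + q) / (U 0 0) ^ 2 := by
    rw [hMinv, fromBlocks_mulVec, sumElim_dotProduct_sumElim]
    simp only [Sum.elim_comp_inl, Sum.elim_comp_inr, mulVec_zero, add_zero,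
      zero_dotProduct, dotProduct_zero]
    rw [add_mulVec, dotProduct_add]
    have hT1 : e ⬝ᵥ (A⁻¹ *ᵥ e) = (U 0 0)⁻¹ * (U 0 0)⁻¹ := by
      rw [hAinvE, ← mulVec_mulVec, hdotT, hUinv1, dotProduct_smul, smul_eq_mul, he,
        single_dotProduct, one_mul, Pi.single_eq_same, mul_one]
    have hT2 : e ⬝ᵥ ((A⁻¹ * C * (D - Cᵀ * A⁻¹ * C)⁻¹ * Cᵀ * A⁻¹) *ᵥ e) =
        (U 0 0)⁻¹ * ((U 0 0)⁻¹ * q) := by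
      rw [hP2, ← mulVec_mulVec, hdotT,
        ← mulVec_mulVec e B ((D - Bᵀ * B)⁻¹ * (Bᵀ * U⁻¹)),
        ← mulVec_mulVec e ((D - Bᵀ * B)⁻¹) (Bᵀ * U⁻¹),
        ← mulVec_mulVec e Bᵀ U⁻¹, hUinv1, mulVec_smul, mulVec_smul, mulVec_smul,
        dotProduct_smul, smul_eq_mul]
    rw [hT1, hT2]
    rw [div_eq_mul_inv, ← mul_inv, ← sq]
    ring
  refine ⟨key, ?_⟩
  rw [key, Real.sqrt_div' (1 + q) (sq_nonneg (U 0 0)), Real.sqrt_sq (hUd 0).le]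

end
end
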